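/- arXiv:1403.3641 — 9 statements merged into one kernel-verified Lean document; each statement's English description precedes it below -/
import Mathlib

section
/- For every p ∈ ℝ³ with p ≠ 0 or any p, the function x ↦ e^{2x}/√(e^{2x}+|p|²) is convex and monotonically increasing on ℝ. -/
open Real

theorem stmt_0 (p : EuclideanSpace ℝ (Fin 3)) :
    ConvexOn ℝ Set.univ (fun x : ℝ => exp (2 * x) / Real.sqrt (exp (2 * x) + ‖p‖ ^ 2)) ∧
    Monotone (fun x : ℝ => exp (2 * x) / Real.sqrt (exp (2 * x) + ‖p‖ ^ 2)) := by
  set c : ℝ := ‖p‖ ^ 2 with hcdef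
  have hc0 : 0 ≤ c := sq_nonneg _
  have hs : ∀ x : ℝ, 0 < exp (2 * x) + c := fun x => by positivity
  have key : ∀ x : ℝ, HasDerivAt (fun x : ℝ => exp (2 * x) / Real.sqrt (exp (2 * x) + c))
      (Real.sqrt (exp (2 * x) + c) - c ^ 2 /
        ((exp (2 * x) + c) * Real.sqrt (exp (2 * x) + c))) x := by
    intro x
    have hsx := hs x
    have hq : 0 < Real.sqrt (exp (2 * x) + c) := Real.sqrt_pos.mpr hsx
    have h1 : HasDerivAt (fun x : ℝ => exp (2 * x)) (exp (2 * x) * 2) x := by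
      simpa using ((hasDerivAt_id x).const_mul 2).exp
    have h2 : HasDerivAt (fun x : ℝ => exp (2 * x) + c) (exp (2 * x) * 2) x :=
      h1.add_const c
    have h3 := h2.sqrt hsx.ne'
    have h4 := h1.div h3 hq.ne'
    refine h4.congr_deriv ?_
    set q := Real.sqrt (exp (2 * x) + c) with hqdef
    have hq2 : q ^ 2 = exp (2 * x) + c := Real.sq_sqrt hsx.le
    have he : exp (2 * x) = q ^ 2 - c := by linarith
    rw [he]
    have hq0 : q ≠ 0 := ne_of_gt hq
    field_simp
    ring
  have hdiff : Differentiable ℝ (fun x : ℝ => exp (2 * x) / Real.sqrt (exp (2 * x) + c)) :=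
    fun x => (key x).differentiableAt
  have hderiv : ∀ x : ℝ, deriv (fun x : ℝ => exp (2 * x) / Real.sqrt (exp (2 * x) + c)) x =
      Real.sqrt (exp (2 * x) + c) - c ^ 2 /
        ((exp (2 * x) + c) * Real.sqrt (exp (2 * x) + c)) := fun x => (key x).deriv
  have hdnn : ∀ x : ℝ, 0 ≤ Real.sqrt (exp (2 * x) + c) - c ^ 2 /
      ((exp (2 * x) + c) * Real.sqrt (exp (2 * x) + c)) := by
    intro x
    have hsx := hs x
    have hq : 0 < Real.sqrt (exp (2 * x) + c) := Real.sqrt_pos.mpr hsx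
    have hq2 : Real.sqrt (exp (2 * x) + c) ^ 2 = exp (2 * x) + c := Real.sq_sqrt hsx.le
    rw [sub_nonneg, div_le_iff₀ (by positivity)]
    have he : 0 < exp (2 * x) := exp_pos _
    nlinarith [sq_nonneg (exp (2 * x)), mul_pos hsx hq]
  have hdmono : Monotone (fun x : ℝ => Real.sqrt (exp (2 * x) + c) - c ^ 2 /
      ((exp (2 * x) + c) * Real.sqrt (exp (2 * x) + c))) := by
    intro x y hxy
    have hsx := hs x
    have hsy := hs y
    have hqx : 0 < Real.sqrt (exp (2 * x) + c) := Real.sqrt_pos.mpr hsx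
    have hqy : 0 < Real.sqrt (exp (2 * y) + c) := Real.sqrt_pos.mpr hsy
    have hle : exp (2 * x) + c ≤ exp (2 * y) + c := by
      have := Real.exp_le_exp.mpr (by linarith : 2 * x ≤ 2 * y)
      linarith
    have hqle : Real.sqrt (exp (2 * x) + c) ≤ Real.sqrt (exp (2 * y) + c) :=
      Real.sqrt_le_sqrt hle
    dsimp only
    have h5 : c ^ 2 / ((exp (2 * y) + c) * Real.sqrt (exp (2 * y) + c)) ≤
        c ^ 2 / ((exp (2 * x) + c) * Real.sqrt (exp (2 * x) + c)) := by
      gcongr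
      all_goals first
        | positivity
        | exact mul_le_mul hle hqle hqx.le hsy.le
    linarith
  have hmono : Monotone (fun x : ℝ => exp (2 * x) / Real.sqrt (exp (2 * x) + c)) := by
    apply monotone_of_deriv_nonneg hdiff
    intro x
    rw [hderiv x]
    exact hdnn x
  refine ⟨?_, hmono⟩
  apply MonotoneOn.convexOn_of_deriv convex_univ hdiff.continuous.continuousOn
    hdiff.differentiableOn
  rw [interior_univ]
  intro x _ y _ hxy
  rw [hderiv x, hderiv y]
  exact hdmono hxy
end

section
/- Let f(t,p) ≥ 0 with t ↦ ‖f(t,·)‖_{L¹} continuous, and let H_f(t,φ) = e^{2φ} ∫_{ℝ³} f(t,p)/√(e^{2φ}+|p|²) dp. Then for all φ₁, φ₂ ∈ ℝ, |H_f(t,φ₁) − H_f(t,φ₂)| ≤ 2 ‖f(t,·)‖_{L¹} e^{max(φ₁,φ₂)} |φ₁ − φ₂|. -/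
open Real MeasureTheory

lemma sqrt_pos_aux (a z : ℝ) (ha : 0 ≤ a) : 0 < Real.sqrt (exp (2*z) + a) := by
  apply Real.sqrt_pos.mpr; positivity

lemma exp_le_sqrt_aux (a z : ℝ) (ha : 0 ≤ a) : exp z ≤ Real.sqrt (exp (2*z) + a) := by
  rw [show exp z = Real.sqrt (exp z ^ 2) from (Real.sqrt_sq (exp_pos z).le).symm]
  apply Real.sqrt_le_sqrt
  rw [← Real.exp_nat_mul]
  norm_num
  nlinarith [Real.exp_pos z]

lemma key_lemma (a : ℝ) (ha : 0 ≤ a) (x y : ℝ) :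
    |exp (2*x) / Real.sqrt (exp (2*x) + a) - exp (2*y) / Real.sqrt (exp (2*y) + a)| ≤
      2 * exp (max x y) * |x - y| := by
  set g : ℝ → ℝ := fun z => exp (2*z) / Real.sqrt (exp (2*z) + a) with hg
  set D : ℝ → ℝ := fun z =>
    ((2 * exp (2*z)) * Real.sqrt (exp (2*z) + a)
      - exp (2*z) * ((2 * exp (2*z)) / (2 * Real.sqrt (exp (2*z) + a))))
      / Real.sqrt (exp (2*z) + a) ^ 2 with hD
  have hderiv : ∀ z ∈ Set.uIcc x y, HasDerivWithinAt g (D z) (Set.uIcc x y) z := by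
    intro z _
    have htop : HasDerivAt (fun z => exp (2*z)) (2 * exp (2*z)) z := by
      have := ((hasDerivAt_id z).const_mul 2).exp
      simpa [mul_comm] using this
    have hne : exp (2*z) + a ≠ 0 := by positivity
    have hs := (htop.add_const a).sqrt hne
    have hsne : Real.sqrt (exp (2*z) + a) ≠ 0 := (sqrt_pos_aux a z ha).ne'
    exact (htop.div hs hsne).hasDerivWithinAt
  have hbound : ∀ z ∈ Set.uIcc x y, ‖D z‖ ≤ 2 * exp (max x y) := by
    intro z hz
    set e := exp z with he
    set s := Real.sqrt (exp (2*z) + a) with hs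
    have hspos : 0 < s := sqrt_pos_aux a z ha
    have hes : e ≤ s := exp_le_sqrt_aux a z ha
    have hepos : 0 < e := exp_pos z
    have hE : exp (2*z) = e^2 := by rw [two_mul, exp_add]; ring
    have hDz : D z = 2 * e^2 / s - e^4 / s^3 := by
      have h1 : D z = 2 * exp (2*z) / s - exp (2*z)^2 / s^3 := by
        rw [hD]; simp only [← hs]; field_simp
      rw [h1, hE]; ring
    have hzle : z ≤ max x y := by
      rcases Set.mem_uIcc.mp hz with h | h
      · exact le_trans h.2 (le_max_right x y)
      · exact le_trans h.2 (le_max_left x y)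
    have hee : e ≤ exp (max x y) := Real.exp_le_exp.mpr hzle
    rw [Real.norm_eq_abs, hDz, abs_le]
    constructor
    · have h1 : e^4 / s^3 ≤ e := by
        rw [div_le_iff₀ (by positivity)]
        nlinarith [pow_le_pow_left₀ hepos.le hes 3]
      have h2 : 0 ≤ 2 * e^2 / s := by positivity
      have : 0 < exp (max x y) := exp_pos _
      nlinarith
    · have h1 : 2 * e^2 / s ≤ 2 * e := by
        rw [div_le_iff₀ hspos]
        nlinarith
      have h2 : 0 ≤ e^4 / s^3 := by positivity
      nlinarith
  have := (convex_uIcc x y).norm_image_sub_le_of_norm_hasDerivWithin_le hderiv hbound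
    Set.left_mem_uIcc Set.right_mem_uIcc
  simpa [Real.norm_eq_abs, abs_sub_comm] using this

theorem stmt_2 (f : ℝ → EuclideanSpace ℝ (Fin 3) → ℝ)
    (hf_nonneg : ∀ t p, 0 ≤ f t p)
    (hf_int : ∀ t, Integrable (f t))
    (hf_cont : Continuous fun t => ∫ p, f t p)
    (H : ℝ → ℝ → ℝ)
    (hH : ∀ t φ, H t φ = exp (2 * φ) * ∫ p, f t p / Real.sqrt (exp (2 * φ) + ‖p‖ ^ 2))
    (t φ₁ φ₂ : ℝ) :
    |H t φ₁ - H t φ₂| ≤ 2 * (∫ p, f t p) * exp (max φ₁ φ₂) * |φ₁ - φ₂| := by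
  set g : ℝ → EuclideanSpace ℝ (Fin 3) → ℝ :=
    fun φ p => exp (2 * φ) / Real.sqrt (exp (2 * φ) + ‖p‖ ^ 2) with hg
  have hgcont : ∀ φ, Continuous (g φ) := by
    intro φ
    apply Continuous.div continuous_const
    · exact Real.continuous_sqrt.comp (by continuity)
    · intro p; exact (sqrt_pos_aux (‖p‖^2) φ (by positivity)).ne'
  have hgbd : ∀ φ p, |g φ p| ≤ exp φ := by
    intro φ p
    have h1 : 0 < Real.sqrt (exp (2*φ) + ‖p‖^2) := sqrt_pos_aux _ _ (by positivity)
    rw [hg, abs_of_nonneg (by positivity)]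
    rw [div_le_iff₀ h1]
    have := exp_le_sqrt_aux (‖p‖^2) φ (by positivity)
    nlinarith [exp_pos φ, exp_pos (2*φ), this, h1.le,
      (by rw [two_mul, exp_add] : exp (2*φ) = exp φ * exp φ)]
  have hint : ∀ φ, Integrable (fun p => f t p * g φ p) := by
    intro φ
    apply Integrable.mono ((hf_int t).const_mul (exp φ))
    · exact ((hf_int t).aestronglyMeasurable.mul (hgcont φ).aestronglyMeasurable)
    · filter_upwards with p
      rw [Real.norm_eq_abs, Real.norm_eq_abs, abs_mul,
        abs_of_nonneg (hf_nonneg t p), abs_mul, abs_of_nonneg (hf_nonneg t p),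
        abs_of_pos (exp_pos φ), mul_comm (exp φ) (f t p)]
      exact mul_le_mul_of_nonneg_left (hgbd φ p) (hf_nonneg t p)
  have hHeq : ∀ φ, H t φ = ∫ p, f t p * g φ p := by
    intro φ
    rw [hH, ← integral_const_mul]
    congr 1; funext p
    rw [hg]; ring
  have hsub : H t φ₁ - H t φ₂ = ∫ p, f t p * g φ₁ p - f t p * g φ₂ p := by
    rw [hHeq, hHeq, integral_sub (hint φ₁) (hint φ₂)]
  rw [hsub]
  calc |∫ p, f t p * g φ₁ p - f t p * g φ₂ p|
      ≤ ∫ p, |f t p * g φ₁ p - f t p * g φ₂ p| := by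
        simpa [Real.norm_eq_abs] using
          norm_integral_le_integral_norm (fun p => f t p * g φ₁ p - f t p * g φ₂ p)
    _ ≤ ∫ p, f t p * (2 * exp (max φ₁ φ₂) * |φ₁ - φ₂|) := by
        apply integral_mono ((hint φ₁).sub (hint φ₂)).abs ((hf_int t).mul_const _)
        intro p
        simp only [Pi.sub_apply]
        rw [← mul_sub, abs_mul, abs_of_nonneg (hf_nonneg t p)]
        exact mul_le_mul_of_nonneg_left (key_lemma (‖p‖^2) (by positivity) φ₁ φ₂)
          (hf_nonneg t p)
    _ = 2 * (∫ p, f t p) * exp (max φ₁ φ₂) * |φ₁ - φ₂| := by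
        rw [integral_mul_const]; ring
end

section
/- Let G be the 3×3 matrix with entries G^{ij}(p) = √2 e^{φ} (e^{2φ}+|p|²)^{-1/4} ( e^{φ} δ^{ij} + p^i p^j/(e^{φ}+√(e^{2φ}+|p|²)) ). Then G·Gᵀ = 2 e^{2φ} D[φ], where D^{ij}[φ] = (e^{2φ} δ^{ij} + p^i p^j)/√(e^{2φ}+|p|²). -/
lemma offdiag_aux (a s x y z : ℝ) (has : a + s ≠ 0)
    (hm : x*x + y*y + z*z = s^2 - a^2) :
    (a + x*x/(a+s)) * (x*y/(a+s)) + (x*y/(a+s)) * (a + y*y/(a+s))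
      + (x*z/(a+s)) * (y*z/(a+s)) = x*y := by
  field_simp
  linear_combination (x*y) * hm

lemma diag_aux (a s x y z : ℝ) (has : a + s ≠ 0)
    (hm : x*x + y*y + z*z = s^2 - a^2) :
    (a + x*x/(a+s)) * (a + x*x/(a+s)) + (x*y/(a+s)) * (x*y/(a+s))
      + (x*z/(a+s)) * (x*z/(a+s)) = a^2 + x*x := by
  field_simp
  linear_combination (x*x) * hm

noncomputable def Dmat (φ : ℝ) (p : EuclideanSpace ℝ (Fin 3)) (i j : Fin 3) : ℝ :=
  (Real.exp (2 * φ) * (if i = j then 1 else 0) + p i * p j) /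
    Real.sqrt (Real.exp (2 * φ) + ‖p‖ ^ 2)

noncomputable def Gmat (φ : ℝ) (p : EuclideanSpace ℝ (Fin 3)) (i j : Fin 3) : ℝ :=
  Real.sqrt 2 * Real.exp φ * (Real.exp (2 * φ) + ‖p‖ ^ 2) ^ (-(1 : ℝ) / 4) *
    (Real.exp φ * (if i = j then 1 else 0) +
      p i * p j / (Real.exp φ + Real.sqrt (Real.exp (2 * φ) + ‖p‖ ^ 2)))

theorem stmt_8 (φ : ℝ) (p : EuclideanSpace ℝ (Fin 3)) :
    (Matrix.of fun i j => Gmat φ p i j) *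
        Matrix.transpose (Matrix.of fun i j => Gmat φ p i j) =
      (2 * Real.exp (2 * φ)) • Matrix.of fun i j => Dmat φ p i j := by
  ext i j
  simp only [Matrix.mul_apply, Matrix.transpose_apply, Matrix.of_apply, Matrix.smul_apply,
    smul_eq_mul, Gmat, Dmat, Fin.sum_univ_three]
  set a := Real.exp φ with ha_def
  have ha : 0 < a := Real.exp_pos φ
  have hEpos : (0:ℝ) < Real.exp (2*φ) + ‖p‖^2 := by positivity
  set E := Real.exp (2*φ) + ‖p‖^2 with hE_def
  set s := Real.sqrt E with hs_def
  have hs : 0 < s := Real.sqrt_pos.mpr hEpos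
  have hs2 : s^2 = E := Real.sq_sqrt hEpos.le
  have has : a + s ≠ 0 := by positivity
  have ha2 : Real.exp (2*φ) = a^2 := by
    rw [ha_def, two_mul, Real.exp_add]; ring
  set C := Real.sqrt 2 * a * E ^ (-(1:ℝ)/4) with hC_def
  have hC : C^2 = 2*a^2/s := by
    rw [hC_def, mul_pow, mul_pow, Real.sq_sqrt (by norm_num : (0:ℝ) ≤ 2)]
    rw [← Real.rpow_natCast (E ^ (-(1:ℝ)/4)) 2, ← Real.rpow_mul hEpos.le]
    norm_num
    rw [Real.rpow_neg hEpos.le, ← Real.sqrt_eq_rpow, ← hs_def]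
    ring
  have hm : p 0 * p 0 + p 1 * p 1 + p 2 * p 2 = s^2 - a^2 := by
    rw [hs2, hE_def, ha2]
    have hnp : ‖p‖^2 = p 0 ^ 2 + p 1 ^ 2 + p 2 ^ 2 := by
      rw [EuclideanSpace.norm_eq, Real.sq_sqrt (by positivity)]
      simp [Fin.sum_univ_three]
    rw [hnp]; ring
  rw [ha2]
  fin_cases i <;> fin_cases j <;>
    simp only [Fin.zero_eta, Fin.mk_one, Fin.reduceFinMk, Fin.isValue, Fin.reduceEq,
      if_true, if_false, ite_true, ite_false, reduceIte]
  · linear_combination (C*C) * diag_aux a s (p 0) (p 1) (p 2) has hm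
      + (a^2 + p 0 * p 0) * hC
  · linear_combination (C*C) * offdiag_aux a s (p 0) (p 1) (p 2) has hm
      + (p 0 * p 1) * hC
  · linear_combination (C*C) * offdiag_aux a s (p 0) (p 2) (p 1) has (by linarith)
      + (p 0 * p 2) * hC
  · linear_combination (C*C) * offdiag_aux a s (p 1) (p 0) (p 2) has (by linarith)
      + (p 1 * p 0) * hC
  · linear_combination (C*C) * diag_aux a s (p 1) (p 0) (p 2) has (by linarith)
      + (a^2 + p 1 * p 1) * hC
  · linear_combination (C*C) * offdiag_aux a s (p 1) (p 2) (p 0) has (by linarith)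
      + (p 1 * p 2) * hC
  · linear_combination (C*C) * offdiag_aux a s (p 2) (p 0) (p 1) has (by linarith)
      + (p 2 * p 0) * hC
  · linear_combination (C*C) * offdiag_aux a s (p 2) (p 1) (p 0) has (by linarith)
      + (p 2 * p 1) * hC
  · linear_combination (C*C) * diag_aux a s (p 2) (p 0) (p 1) has (by linarith)
      + (a^2 + p 2 * p 2) * hC
end

section
/- For every φ ∈ ℝ, p ∈ ℝ³, and indices i, j, k, the partial derivative ∂_{p^k} D^{ij}[φ] = (δ^i_k p^j + δ^j_k p^i)/√(e^{2φ}+|p|²) − D^{ij}[φ] p_k/(e^{2φ}+|p|²) is bounded in absolute value by a constant independent of φ and p. -/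
lemma key (φ : ℝ) (p : EuclideanSpace ℝ (Fin 3)) (i j k : Fin 3) :
    fderiv ℝ (fun q => Dmat φ q i j) p (EuclideanSpace.single k 1) =
      ((if i = k then 1 else 0) * p j + (if j = k then 1 else 0) * p i) /
        Real.sqrt (Real.exp (2 * φ) + ‖p‖ ^ 2) -
        Dmat φ p i j * p k / (Real.exp (2 * φ) + ‖p‖ ^ 2) := by
  set E := Real.exp (2 * φ) with hE
  have hEpos : 0 < E := Real.exp_pos _
  have hgpos : 0 < E + ‖p‖ ^ 2 := by positivity
  set S := Real.sqrt (E + ‖p‖ ^ 2) with hS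
  have hSpos : 0 < S := Real.sqrt_pos.2 hgpos
  have hS2 : S ^ 2 = E + ‖p‖ ^ 2 := Real.sq_sqrt hgpos.le
  have hi : HasFDerivAt (fun q : EuclideanSpace ℝ (Fin 3) => q i)
      (EuclideanSpace.proj i : EuclideanSpace ℝ (Fin 3) →L[ℝ] ℝ) p :=
    (PiLp.proj (𝕜 := ℝ) 2 (fun _ : Fin 3 => ℝ) i).hasFDerivAt
  have hj : HasFDerivAt (fun q : EuclideanSpace ℝ (Fin 3) => q j)
      (EuclideanSpace.proj j : EuclideanSpace ℝ (Fin 3) →L[ℝ] ℝ) p :=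
    (PiLp.proj (𝕜 := ℝ) 2 (fun _ : Fin 3 => ℝ) j).hasFDerivAt
  have hN : HasFDerivAt (fun q : EuclideanSpace ℝ (Fin 3) =>
      E * (if i = j then 1 else 0) + q i * q j)
      (p i • (EuclideanSpace.proj j : EuclideanSpace ℝ (Fin 3) →L[ℝ] ℝ)
        + p j • (EuclideanSpace.proj i : EuclideanSpace ℝ (Fin 3) →L[ℝ] ℝ)) p :=
    (hi.mul hj).const_add _
  have hg : HasFDerivAt (fun q : EuclideanSpace ℝ (Fin 3) => E + ‖q‖ ^ 2)
      (2 • (innerSL ℝ p)) p := by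
    have := (hasFDerivAt_id p).norm_sq
    simpa using this.const_add E
  have hInv : HasFDerivAt (fun q : EuclideanSpace ℝ (Fin 3) =>
      (Real.sqrt (E + ‖q‖ ^ 2))⁻¹)
      ((-(1 / (2 * S)) / S ^ 2) • (2 • (innerSL ℝ p))) p := by
    have hsq : HasDerivAt (fun x => (Real.sqrt x)⁻¹) (-(1 / (2 * S)) / S ^ 2)
        (E + ‖p‖ ^ 2) := by
      have h1 : HasDerivAt Real.sqrt (1 / (2 * S)) (E + ‖p‖ ^ 2) := by
        simpa [hS] using Real.hasDerivAt_sqrt hgpos.ne'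
      exact h1.inv hSpos.ne'
    exact HasDerivAt.comp_hasFDerivAt (h₂ := fun x => (Real.sqrt x)⁻¹) (f := fun q : EuclideanSpace ℝ (Fin 3) => E + ‖q‖ ^ 2) p hsq hg
  have hD : HasFDerivAt (fun q : EuclideanSpace ℝ (Fin 3) => Dmat φ q i j)
      ((E * (if i = j then 1 else 0) + p i * p j) •
          ((-(1 / (2 * S)) / S ^ 2) • (2 • (innerSL ℝ p)))
        + S⁻¹ • (p i • (EuclideanSpace.proj j : EuclideanSpace ℝ (Fin 3) →L[ℝ] ℝ)
        + p j • (EuclideanSpace.proj i : EuclideanSpace ℝ (Fin 3) →L[ℝ] ℝ))) p := by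
    have := hN.mul hInv
    simpa [Dmat, ← hE, ← hS, div_eq_mul_inv, Pi.mul_def] using this
  rw [hD.fderiv]
  have hproj : ∀ a : Fin 3, (EuclideanSpace.proj a : EuclideanSpace ℝ (Fin 3) →L[ℝ] ℝ)
      (EuclideanSpace.single k 1) = if a = k then 1 else 0 := by
    intro a
    simp [EuclideanSpace.single_apply]
  have hinner : (innerSL ℝ p) (EuclideanSpace.single k 1) = p k := by
    simp [real_inner_comm, EuclideanSpace.inner_single_right]
  simp only [ContinuousLinearMap.add_apply, ContinuousLinearMap.coe_smul', Pi.smul_apply,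
    ContinuousLinearMap.smul_apply, hproj, hinner, smul_eq_mul]
  rw [Dmat, ← hE, ← hS, ← hS2]
  field_simp
  ring

lemma coord_le (p : EuclideanSpace ℝ (Fin 3)) (a : Fin 3) : |p a| ≤ ‖p‖ := by
  have h : (p a) ^ 2 ≤ ‖p‖ ^ 2 := by
    rw [EuclideanSpace.norm_eq]
    rw [Real.sq_sqrt (by positivity)]
    exact Finset.single_le_sum (f := fun x => ‖p x‖ ^ 2)
      (fun x _ => by positivity) (Finset.mem_univ a) |>.trans_eq' (by simp [sq_abs])
  calc |p a| = Real.sqrt ((p a) ^ 2) := (Real.sqrt_sq_eq_abs _).symm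
    _ ≤ Real.sqrt (‖p‖ ^ 2) := Real.sqrt_le_sqrt h
    _ = ‖p‖ := Real.sqrt_sq (norm_nonneg p)

theorem stmt_9 : ∃ C : ℝ, 0 < C ∧
    ∀ (φ : ℝ) (p : EuclideanSpace ℝ (Fin 3)) (i j k : Fin 3),
      (fderiv ℝ (fun q => Dmat φ q i j) p (EuclideanSpace.single k 1) =
        ((if i = k then 1 else 0) * p j + (if j = k then 1 else 0) * p i) /
          Real.sqrt (Real.exp (2 * φ) + ‖p‖ ^ 2) -
          Dmat φ p i j * p k / (Real.exp (2 * φ) + ‖p‖ ^ 2)) ∧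
      |fderiv ℝ (fun q => Dmat φ q i j) p (EuclideanSpace.single k 1)| ≤ C := by
  refine ⟨3, by norm_num, fun φ p i j k => ⟨key φ p i j k, ?_⟩⟩
  rw [key φ p i j k]
  set E := Real.exp (2 * φ) with hE
  have hEpos : 0 < E := Real.exp_pos _
  have hgpos : 0 < E + ‖p‖ ^ 2 := by positivity
  set S := Real.sqrt (E + ‖p‖ ^ 2) with hS
  have hSpos : 0 < S := Real.sqrt_pos.2 hgpos
  have hS2 : S ^ 2 = E + ‖p‖ ^ 2 := Real.sq_sqrt hgpos.le
  have hpS : ‖p‖ ≤ S := by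
    have : ‖p‖ = Real.sqrt (‖p‖ ^ 2) := (Real.sqrt_sq (norm_nonneg p)).symm
    rw [this, hS]
    exact Real.sqrt_le_sqrt (by linarith)
  have hcoord : ∀ a : Fin 3, |p a| ≤ S := fun a => (coord_le p a).trans hpS
  have hDle : |Dmat φ p i j| ≤ S := by
    rw [Dmat, ← hE, ← hS, abs_div, abs_of_pos hSpos]
    rw [div_le_iff₀ hSpos, ← sq, hS2]
    calc |E * (if i = j then 1 else 0) + p i * p j|
        ≤ |E * (if i = j then 1 else 0)| + |p i * p j| := abs_add_le _ _
      _ ≤ E + ‖p‖ ^ 2 := by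
          rw [abs_mul, abs_mul, abs_of_pos hEpos]
          have h1 : |if i = j then (1:ℝ) else 0| ≤ 1 := by split <;> simp
          have h2 : |p i| * |p j| ≤ ‖p‖ * ‖p‖ := by
            exact mul_le_mul (coord_le p i) (coord_le p j) (abs_nonneg _) (norm_nonneg _)
          nlinarith [hEpos]

  have habs1 : |((if i = k then (1:ℝ) else 0) * p j + (if j = k then 1 else 0) * p i) / S|
      ≤ 2 := by
    rw [abs_div, abs_of_pos hSpos, div_le_iff₀ hSpos]
    calc |(if i = k then (1:ℝ) else 0) * p j + (if j = k then 1 else 0) * p i|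
        ≤ |(if i = k then (1:ℝ) else 0) * p j| + |(if j = k then 1 else 0) * p i| := abs_add_le _ _
      _ ≤ S + S := by
          rw [abs_mul, abs_mul]
          have h1 : |if i = k then (1:ℝ) else 0| ≤ 1 := by split <;> simp
          have h2 : |if j = k then (1:ℝ) else 0| ≤ 1 := by split <;> simp
          have := hcoord j; have := hcoord i
          nlinarith [abs_nonneg (p i), abs_nonneg (p j)]
      _ = 2 * S := by ring
  have habs2 : |Dmat φ p i j * p k / (E + ‖p‖ ^ 2)| ≤ 1 := by
    rw [abs_div, abs_of_pos hgpos, div_le_one hgpos, abs_mul, ← hS2]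
    nlinarith [hDle, hcoord k, abs_nonneg (Dmat φ p i j), abs_nonneg (p k)]
  calc |((if i = k then (1:ℝ) else 0) * p j + (if j = k then 1 else 0) * p i) / S
        - Dmat φ p i j * p k / (E + ‖p‖ ^ 2)|
      ≤ |((if i = k then (1:ℝ) else 0) * p j + (if j = k then 1 else 0) * p i) / S|
        + |Dmat φ p i j * p k / (E + ‖p‖ ^ 2)| := abs_sub _ _
    _ ≤ 2 + 1 := add_le_add habs1 habs2
    _ = 3 := by norm_num
end

section
/- There is a constant C > 0 such that for all φ ∈ ℝ, p ∈ ℝ³, and all indices i,j,k,l, the second partial derivative ∂_{p^k}∂_{p^l} D^{ij}[φ](p) satisfies |∂_{p^k}∂_{p^l} D^{ij}[φ](p)| ≤ C e^{−φ}. -/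
open Real

namespace Stmt10

noncomputable abbrev E3 := EuclideanSpace ℝ (Fin 3)
noncomputable def pr (m : Fin 3) : E3 →L[ℝ] ℝ := EuclideanSpace.proj m
noncomputable def S (φ : ℝ) (q : E3) : ℝ := Real.sqrt (Real.exp (2 * φ) + ‖q‖ ^ 2)
noncomputable def W (φ : ℝ) (q : E3) : ℝ := (S φ q)⁻¹

lemma S_pos (φ : ℝ) (q : E3) : 0 < S φ q := Real.sqrt_pos.2 (by positivity)
lemma S_sq (φ : ℝ) (q : E3) : (S φ q)^2 = Real.exp (2*φ) + ‖q‖^2 := Real.sq_sqrt (by positivity)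

lemma exp_le_S (φ : ℝ) (q : E3) : Real.exp φ ≤ S φ q := by
  have h1 : Real.exp φ = Real.sqrt (Real.exp (2*φ)) := by
    rw [show (2:ℝ)*φ = φ + φ by ring, Real.exp_add, ← sq]
    exact (Real.sqrt_sq (Real.exp_pos φ).le).symm
  rw [h1]
  exact Real.sqrt_le_sqrt (le_add_of_nonneg_right (by positivity))

lemma coord_le_S (φ : ℝ) (q : E3) (m : Fin 3) : |q m| ≤ S φ q := by
  have h1 : (q m)^2 ≤ ‖q‖^2 := by
    have h2 : ‖q‖^2 = ∑ n : Fin 3, ‖q n‖^2 := by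
      rw [EuclideanSpace.norm_eq, Real.sq_sqrt (by positivity)]
    rw [h2]
    have := Finset.single_le_sum (f := fun n => ‖q n‖^2)
      (fun n _ => by positivity) (Finset.mem_univ m)
    simpa [sq_abs] using this
  have h3 : (q m)^2 ≤ (S φ q)^2 := by
    rw [S_sq]; nlinarith [Real.exp_pos (2*φ)]
  calc |q m| = Real.sqrt ((q m)^2) := (Real.sqrt_sq_eq_abs _).symm
    _ ≤ Real.sqrt ((S φ q)^2) := Real.sqrt_le_sqrt h3
    _ = S φ q := Real.sqrt_sq (S_pos φ q).le

lemma hasFDerivAt_S (φ : ℝ) (q : E3) :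
    HasFDerivAt (S φ) ((1 / (2 * S φ q)) • (2 • (innerSL ℝ q))) q := by
  have h : HasFDerivAt (fun q : E3 => Real.exp (2*φ) + ‖q‖^2)
      ((0 : E3 →L[ℝ] ℝ) + 2 • (innerSL ℝ q).comp (ContinuousLinearMap.id ℝ E3)) q :=
    (hasFDerivAt_const _ _).add (hasFDerivAt_id q).norm_sq
  have := h.sqrt (by positivity)
  have e : S φ = fun y => Real.sqrt (Real.exp (2*φ) + ‖y‖^2) := rfl
  rw [e]
  simpa using this

lemma hasFDerivAt_W (φ : ℝ) (q : E3) :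
    HasFDerivAt (W φ) ((-((S φ q) ^ 2)⁻¹) • ((1 / (2 * S φ q)) • (2 • (innerSL ℝ q)))) q :=
  (hasDerivAt_inv (S_pos φ q).ne').comp_hasFDerivAt q (hasFDerivAt_S φ q)

lemma hasFDerivAt_proj (m : Fin 3) (q : E3) : HasFDerivAt (fun q : E3 => q m) (pr m) q :=
  (pr m).hasFDerivAt

noncomputable def Nf (φ : ℝ) (i j : Fin 3) (q : E3) : ℝ :=
  Real.exp (2 * φ) * (if i = j then 1 else 0) + q i * q j

lemma hasFDerivAt_Nf (φ : ℝ) (i j : Fin 3) (q : E3) :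
    HasFDerivAt (Nf φ i j) ((0 : E3 →L[ℝ] ℝ) + (q i • pr j + q j • pr i)) q :=
  (hasFDerivAt_const _ _).add ((hasFDerivAt_proj i q).mul (hasFDerivAt_proj j q))

lemma Nf_le (φ : ℝ) (i j : Fin 3) (q : E3) : |Nf φ i j q| ≤ 2 * (S φ q)^2 := by
  have h1 : |q i| ≤ S φ q := coord_le_S φ q i
  have h2 : |q j| ≤ S φ q := coord_le_S φ q j
  have h3 : Real.exp (2*φ) ≤ (S φ q)^2 := by
    rw [S_sq]; exact le_add_of_nonneg_right (by positivity)
  have h4 : |q i * q j| ≤ (S φ q)^2 := by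
    rw [abs_mul, sq]
    exact mul_le_mul h1 h2 (abs_nonneg _) (S_pos φ q).le
  calc |Nf φ i j q| ≤ |Real.exp (2*φ) * (if i = j then 1 else 0)| + |q i * q j| := abs_add_le _ _
    _ ≤ (S φ q)^2 + (S φ q)^2 := by
        refine add_le_add ?_ h4
        rw [abs_mul, abs_of_pos (Real.exp_pos _)]
        split <;> simp <;> [exact h3; positivity]
    _ = 2 * (S φ q)^2 := by ring

noncomputable def g (φ : ℝ) (i j l : Fin 3) (q : E3) : ℝ :=
  ((if i = l then 1 else 0) * q j + (if j = l then 1 else 0) * q i) * W φ q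
    - Nf φ i j q * q l * (W φ q)^3

lemma f_eq (φ : ℝ) (i j : Fin 3) :
    (fun q => Dmat φ q i j) = fun q => Nf φ i j q * W φ q := by
  funext q; simp [Dmat, Nf, W, S, div_eq_mul_inv]

lemma contDiff_f (φ : ℝ) (i j : Fin 3) : ContDiff ℝ 2 (fun q => Dmat φ q i j) := by
  rw [f_eq]
  have hS : ContDiff ℝ 2 (S φ) :=
    (contDiff_const.add (contDiff_norm_sq ℝ)).sqrt (fun q => by positivity)
  have hW : ContDiff ℝ 2 (W φ) := hS.inv (fun q => (S_pos φ q).ne')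
  have hN : ContDiff ℝ 2 (Nf φ i j) :=
    contDiff_const.add ((pr i).contDiff.mul (pr j).contDiff)
  exact hN.mul hW

lemma fderiv_f_apply (φ : ℝ) (i j l : Fin 3) (q : E3) :
    fderiv ℝ (fun q => Dmat φ q i j) q (EuclideanSpace.single l 1) = g φ i j l q := by
  have hf := (hasFDerivAt_Nf φ i j q).mul (hasFDerivAt_W φ q)
  rw [f_eq] at *
  rw [show (fun q => Nf φ i j q * W φ q) = Nf φ i j * W φ from rfl, hf.fderiv]
  have hS := S_pos φ q
  have hS2 := S_sq φ q
  simp only [ContinuousLinearMap.smul_apply, ContinuousLinearMap.sub_apply,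
    ContinuousLinearMap.add_apply, ContinuousLinearMap.zero_apply, smul_eq_mul,
    ContinuousLinearMap.coe_smul', Pi.smul_apply, pr, PiLp.proj_apply,
    EuclideanSpace.single_apply, innerSL_apply_apply, EuclideanSpace.inner_single_right,
    g, Nf, W, one_mul, mul_one, Function.comp_apply, conj_trivial]
  field_simp
  ring

noncomputable def P (φ : ℝ) (i j k l : Fin 3) (p : E3) : ℝ :=
  ((if i = l then 1 else 0) * (if j = k then 1 else 0)
      + (if j = l then 1 else 0) * (if i = k then 1 else 0)) * W φ p
    - ((if i = l then 1 else 0) * p j + (if j = l then 1 else 0) * p i) * p k * (W φ p)^3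
    - ((p j * (if i = k then 1 else 0) + p i * (if j = k then 1 else 0)) * p l
        + Nf φ i j p * (if l = k then 1 else 0)) * (W φ p)^3
    + 3 * Nf φ i j p * p l * p k * (W φ p)^5

lemma fderiv_g_apply (φ : ℝ) (i j k l : Fin 3) (p : E3) :
    fderiv ℝ (g φ i j l) p (EuclideanSpace.single k 1) = P φ i j k l p := by
  have hA : HasFDerivAt
      (fun q : E3 => (if i = l then (1:ℝ) else 0) * q j + (if j = l then (1:ℝ) else 0) * q i)
      ((if i = l then (1:ℝ) else 0) • pr j + (if j = l then (1:ℝ) else 0) • pr i) p :=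
    ((hasFDerivAt_proj j p).const_mul _).add ((hasFDerivAt_proj i p).const_mul _)
  have hW := hasFDerivAt_W φ p
  have hW3 := (hasDerivAt_pow 3 (W φ p)).comp_hasFDerivAt p hW
  have hB := (hasFDerivAt_Nf φ i j p).mul (hasFDerivAt_proj l p)
  have hg := (hA.mul hW).sub ((hB.mul hW3))
  have hg' : HasFDerivAt (g φ i j l) _ p := hg
  rw [hg'.fderiv]
  have hS := S_pos φ p
  have hS2 := S_sq φ p
  simp only [ContinuousLinearMap.smul_apply, ContinuousLinearMap.sub_apply,
    ContinuousLinearMap.add_apply, ContinuousLinearMap.zero_apply, smul_eq_mul,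
    ContinuousLinearMap.coe_smul', Pi.smul_apply, pr, PiLp.proj_apply,
    EuclideanSpace.single_apply, innerSL_apply_apply, EuclideanSpace.inner_single_right,
    P, Nf, W, one_mul, mul_one, Function.comp_apply, conj_trivial, Pi.mul_apply]
  field_simp
  have hS' : S φ p ^ 2 * (S φ p)⁻¹ ^ 2 = 1 := by
    rw [← mul_pow, mul_inv_cancel₀ hS.ne', one_pow]
  ring_nf
  linear_combination (6 * p j * p i * p k * p l
    + 6 * p k * Real.exp (φ * 2) * (if i = j then (1:ℝ) else 0) * p l) * hS'

lemma key (s : ℝ) (hs : 0 < s) (X c : ℝ) (n : ℕ) (hX : |X| ≤ c * s^n) :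
    |X * (s⁻¹)^(n+1)| ≤ c * s⁻¹ := by
  rw [abs_mul, abs_pow, abs_inv, abs_of_pos hs]
  calc |X| * (s⁻¹)^(n+1) ≤ (c * s^n) * (s⁻¹)^(n+1) :=
        mul_le_mul_of_nonneg_right hX (by positivity)
    _ = c * s⁻¹ := by
        rw [pow_succ]
        field_simp
        ring_nf
        rw [mul_assoc, ← mul_pow, mul_inv_cancel₀ hs.ne', one_pow, mul_one]

lemma P_le (φ : ℝ) (i j k l : Fin 3) (p : E3) : |P φ i j k l p| ≤ 14 * Real.exp (-φ) := by
  set s := S φ p with hs_def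
  have hs : 0 < s := S_pos φ p
  have hd : ∀ a b : Fin 3, |(if a = b then (1:ℝ) else 0)| ≤ 1 := by
    intro a b; split <;> norm_num
  have hm : ∀ m : Fin 3, |p m| ≤ s := coord_le_S φ p
  have hN : |Nf φ i j p| ≤ 2 * s^2 := Nf_le φ i j p
  have hW : W φ p = s⁻¹ := rfl
  have h1 : |((if i = l then (1:ℝ) else 0) * (if j = k then 1 else 0)
      + (if j = l then 1 else 0) * (if i = k then 1 else 0)) * W φ p| ≤ 2 * s⁻¹ := by
    have hb : |((if i = l then (1:ℝ) else 0) * (if j = k then 1 else 0)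
        + (if j = l then 1 else 0) * (if i = k then 1 else 0))| ≤ 2 * s^0 := by
      calc |((if i = l then (1:ℝ) else 0) * (if j = k then 1 else 0)
          + (if j = l then 1 else 0) * (if i = k then 1 else 0))|
          ≤ |(if i = l then (1:ℝ) else 0) * (if j = k then 1 else 0)|
            + |(if j = l then (1:ℝ) else 0) * (if i = k then 1 else 0)| := abs_add_le _ _
        _ ≤ 1 * 1 + 1 * 1 := by
            refine add_le_add ?_ ?_ <;>
              (rw [abs_mul]; exact mul_le_mul (hd _ _) (hd _ _) (abs_nonneg _) zero_le_one)
        _ = 2 * s^0 := by norm_num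
    simpa [hW] using key s hs _ 2 0 hb
  have h2 : |((if i = l then (1:ℝ) else 0) * p j + (if j = l then 1 else 0) * p i) * p k
      * (W φ p)^3| ≤ 2 * s⁻¹ := by
    have hA : |(if i = l then (1:ℝ) else 0) * p j + (if j = l then 1 else 0) * p i| ≤ 2 * s := by
      calc |(if i = l then (1:ℝ) else 0) * p j + (if j = l then 1 else 0) * p i|
          ≤ |(if i = l then (1:ℝ) else 0) * p j| + |(if j = l then (1:ℝ) else 0) * p i| :=
            abs_add_le _ _
        _ ≤ 1 * s + 1 * s := by
            refine add_le_add ?_ ?_ <;>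
              (rw [abs_mul]; exact mul_le_mul (hd _ _) (hm _) (abs_nonneg _) zero_le_one)
        _ = 2 * s := by ring
    have hb : |((if i = l then (1:ℝ) else 0) * p j + (if j = l then 1 else 0) * p i) * p k|
        ≤ 2 * s^2 := by
      calc |((if i = l then (1:ℝ) else 0) * p j + (if j = l then 1 else 0) * p i) * p k|
          = |(if i = l then (1:ℝ) else 0) * p j + (if j = l then 1 else 0) * p i| * |p k| :=
            abs_mul _ _
        _ ≤ (2 * s) * s := mul_le_mul hA (hm k) (abs_nonneg _) (by positivity)
        _ = 2 * s^2 := by ring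
    simpa [hW] using key s hs _ 2 2 hb
  have h3 : |((p j * (if i = k then (1:ℝ) else 0) + p i * (if j = k then 1 else 0)) * p l
        + Nf φ i j p * (if l = k then 1 else 0)) * (W φ p)^3| ≤ 4 * s⁻¹ := by
    have hA : |p j * (if i = k then (1:ℝ) else 0) + p i * (if j = k then 1 else 0)| ≤ 2 * s := by
      calc |p j * (if i = k then (1:ℝ) else 0) + p i * (if j = k then 1 else 0)|
          ≤ |p j * (if i = k then (1:ℝ) else 0)| + |p i * (if j = k then (1:ℝ) else 0)| :=
            abs_add_le _ _
        _ ≤ s * 1 + s * 1 := by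
            refine add_le_add ?_ ?_ <;>
              (rw [abs_mul]; exact mul_le_mul (hm _) (hd _ _) (abs_nonneg _) hs.le)
        _ = 2 * s := by ring
    have hb : |(p j * (if i = k then (1:ℝ) else 0) + p i * (if j = k then 1 else 0)) * p l
        + Nf φ i j p * (if l = k then 1 else 0)| ≤ 4 * s^2 := by
      calc |(p j * (if i = k then (1:ℝ) else 0) + p i * (if j = k then 1 else 0)) * p l
            + Nf φ i j p * (if l = k then 1 else 0)|
          ≤ |(p j * (if i = k then (1:ℝ) else 0) + p i * (if j = k then 1 else 0)) * p l|
            + |Nf φ i j p * (if l = k then (1:ℝ) else 0)| := abs_add_le _ _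
        _ ≤ (2*s) * s + (2*s^2) * 1 := by
            refine add_le_add ?_ ?_
            · rw [abs_mul]; exact mul_le_mul hA (hm l) (abs_nonneg _) (by positivity)
            · rw [abs_mul]; exact mul_le_mul hN (hd _ _) (abs_nonneg _) (by positivity)
        _ = 4 * s^2 := by ring
    simpa [hW] using key s hs _ 4 2 hb
  have h4 : |3 * Nf φ i j p * p l * p k * (W φ p)^5| ≤ 6 * s⁻¹ := by
    have hb : |3 * Nf φ i j p * p l * p k| ≤ 6 * s^4 := by
      have e1 : |3 * Nf φ i j p * p l * p k| = 3 * |Nf φ i j p| * |p l| * |p k| := by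
        rw [abs_mul, abs_mul, abs_mul]
        norm_num
      rw [e1]
      have ha : 3 * |Nf φ i j p| ≤ 3 * (2*s^2) := by linarith
      have hb2 : 3 * |Nf φ i j p| * |p l| ≤ 3 * (2*s^2) * s :=
        mul_le_mul ha (hm l) (abs_nonneg _) (by positivity)
      calc 3 * |Nf φ i j p| * |p l| * |p k| ≤ 3 * (2*s^2) * s * s :=
            mul_le_mul hb2 (hm k) (abs_nonneg _) (by positivity)
        _ = 6 * s^4 := by ring
    simpa [hW] using key s hs _ 6 4 hb
  have habs4 : ∀ a b c d : ℝ, |a - b - c + d| ≤ |a| + |b| + |c| + |d| := by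
    intro a b c d
    calc |a - b - c + d| ≤ |a - b - c| + |d| := abs_add_le _ _
      _ ≤ (|a - b| + |c|) + |d| := by gcongr; exact abs_sub _ _
      _ ≤ ((|a| + |b|) + |c|) + |d| := by gcongr; exact abs_sub _ _
      _ = |a| + |b| + |c| + |d| := by ring
  have hsum : |P φ i j k l p| ≤ 14 * s⁻¹ := by
    unfold P
    refine le_trans (habs4 _ _ _ _) ?_
    linarith
  have hfin : s⁻¹ ≤ Real.exp (-φ) := by
    rw [Real.exp_neg]
    exact inv_anti₀ (Real.exp_pos φ) (exp_le_S φ p)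
  calc |P φ i j k l p| ≤ 14 * s⁻¹ := hsum
    _ ≤ 14 * Real.exp (-φ) := by linarith

end Stmt10

open Stmt10 in
theorem stmt_10 : ∃ C : ℝ, 0 < C ∧
    ∀ (φ : ℝ) (p : EuclideanSpace ℝ (Fin 3)) (i j k l : Fin 3),
      |iteratedFDeriv ℝ 2 (fun q => Dmat φ q i j) p
          ![EuclideanSpace.single k 1, EuclideanSpace.single l 1]| ≤ C * Real.exp (-φ) := by
  refine ⟨14, by norm_num, fun φ p i j k l => ?_⟩
  have hC : ContDiff ℝ 2 (fun q => Dmat φ q i j) := contDiff_f φ i j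
  have hd1 : DifferentiableAt ℝ (fderiv ℝ (fun q => Dmat φ q i j)) p :=
    ((hC.fderiv_right (m := 1) (by norm_num)).differentiable (by norm_num)).differentiableAt
  have step1 : iteratedFDeriv ℝ 2 (fun q => Dmat φ q i j) p
      ![EuclideanSpace.single k 1, EuclideanSpace.single l 1]
      = fderiv ℝ (fderiv ℝ (fun q => Dmat φ q i j)) p (EuclideanSpace.single k 1)
          (EuclideanSpace.single l 1) := by
    rw [iteratedFDeriv_two_apply]
    simp
  have step2 : fderiv ℝ (fderiv ℝ (fun q => Dmat φ q i j)) p (EuclideanSpace.single k 1)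
      (EuclideanSpace.single l 1)
      = fderiv ℝ (fun q => fderiv ℝ (fun q => Dmat φ q i j) q (EuclideanSpace.single l 1)) p
          (EuclideanSpace.single k 1) := by
    rw [fderiv_clm_apply hd1 (differentiableAt_const _)]
    simp
  have step3 : (fun q => fderiv ℝ (fun q => Dmat φ q i j) q (EuclideanSpace.single l 1))
      = g φ i j l := funext (fderiv_f_apply φ i j l)
  rw [step1, step2, step3, fderiv_g_apply]
  exact P_le φ i j k l p
end

section
/- Let B^{ij}[φ](p) = 2 p^i p^j/(e^{2φ}+|p|²)^{3/2} − |p|² D^{ij}[φ](p)/(e^{2φ}+|p|²)². Then there is a constant C such that for all x ∈ ℝ³, B^{ij}[φ] x_i x_j ≤ C e^{−φ} |x|². -/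
set_option maxHeartbeats 1000000


theorem stmt_12 : ∃ C : ℝ, 0 < C ∧
    ∀ (φ : ℝ) (p x : EuclideanSpace ℝ (Fin 3)),
      ∑ i, ∑ j, (2 * p i * p j / (Real.exp (2 * φ) + ‖p‖ ^ 2) ^ ((3 : ℝ) / 2) -
          ‖p‖ ^ 2 * Dmat φ p i j / (Real.exp (2 * φ) + ‖p‖ ^ 2) ^ 2) * x i * x j ≤
        C * Real.exp (-φ) * ‖x‖ ^ 2 := by
  refine ⟨2, two_pos, fun φ p x => ?_⟩
  set E : ℝ := Real.exp (2 * φ) + ‖p‖ ^ 2 with hE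
  have hEpos : 0 < E := by positivity
  have hsqrt : 0 < Real.sqrt E := Real.sqrt_pos.2 hEpos
  have h32 : (0:ℝ) < E ^ ((3 : ℝ) / 2) := by positivity
  set S : ℝ := p 0 * x 0 + p 1 * x 1 + p 2 * x 2 with hSdef
  have key : (∑ i, ∑ j, (2 * p i * p j / E ^ ((3 : ℝ) / 2) -
          ‖p‖ ^ 2 * Dmat φ p i j / E ^ 2) * x i * x j)
      = 2 * S ^ 2 / E ^ ((3 : ℝ) / 2)
        - ‖p‖ ^ 2 / (E ^ 2 * Real.sqrt E) *
            (Real.exp (2 * φ) * (x 0 ^ 2 + x 1 ^ 2 + x 2 ^ 2) + S ^ 2) := by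
    have hE32' : E ^ ((3 : ℝ) / 2) = Real.sqrt E ^ 3 := by
      rw [Real.sqrt_eq_rpow, ← Real.rpow_natCast (E ^ ((1 : ℝ) / 2)) 3,
        ← Real.rpow_mul hEpos.le]
      norm_num
    simp only [Dmat, ← hE, Fin.sum_univ_three, hSdef, hE32']
    norm_num
    obtain ⟨s, hs, hspos, hsE⟩ : ∃ s : ℝ, Real.sqrt E = s ∧ 0 < s ∧ E = s ^ 2 :=
      ⟨Real.sqrt E, rfl, hsqrt, (Real.sq_sqrt hEpos.le).symm⟩
    rw [hs, hsE]
    simp only [Fin.reduceEq, reduceIte, if_true, if_false]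
    field_simp
    ring
  rw [key]
  have hCS : S ^ 2 ≤ ‖p‖ ^ 2 * ‖x‖ ^ 2 := by
    have hS : S = inner ℝ p x := by
      simp [hSdef, PiLp.inner_apply, RCLike.inner_apply, Fin.sum_univ_three, mul_comm]
    rw [hS]
    have := abs_real_inner_le_norm p x
    calc (inner ℝ p x : ℝ) ^ 2 = |(inner ℝ p x : ℝ)| ^ 2 := (sq_abs _).symm
      _ ≤ (‖p‖ * ‖x‖) ^ 2 := by
          apply pow_le_pow_left₀ (abs_nonneg _) this
      _ = ‖p‖ ^ 2 * ‖x‖ ^ 2 := by ring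
  have hdrop : 0 ≤ ‖p‖ ^ 2 / (E ^ 2 * Real.sqrt E) *
      (Real.exp (2 * φ) * (x 0 ^ 2 + x 1 ^ 2 + x 2 ^ 2) + S ^ 2) := by positivity
  have step1 : 2 * S ^ 2 / E ^ ((3 : ℝ) / 2)
        - ‖p‖ ^ 2 / (E ^ 2 * Real.sqrt E) *
            (Real.exp (2 * φ) * (x 0 ^ 2 + x 1 ^ 2 + x 2 ^ 2) + S ^ 2)
      ≤ 2 * S ^ 2 / E ^ ((3 : ℝ) / 2) := by linarith
  refine step1.trans ?_
  -- 2 S² / E^{3/2} ≤ 2 ‖p‖²‖x‖² / E^{3/2} ≤ 2 E ‖x‖² / E^{3/2} = 2 ‖x‖²/√E ≤ 2 e^{-φ} ‖x‖²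
  have hE32 : E ^ ((3 : ℝ) / 2) = E * Real.sqrt E := by
    rw [show (3:ℝ)/2 = 1 + 1/2 by norm_num, Real.rpow_add hEpos, Real.rpow_one,
      Real.sqrt_eq_rpow]
  have hp2E : ‖p‖ ^ 2 ≤ E := by
    have := Real.exp_pos (2 * φ); rw [hE]; linarith
  have hsqrtE : Real.exp φ ≤ Real.sqrt E := by
    have h1 : Real.exp φ = Real.sqrt (Real.exp (2 * φ)) := by
      rw [show 2 * φ = φ + φ by ring, Real.exp_add, Real.sqrt_mul_self (Real.exp_pos φ).le]
    rw [h1]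
    apply Real.sqrt_le_sqrt
    have : (0:ℝ) ≤ ‖p‖ ^ 2 := by positivity
    rw [hE]; linarith
  calc 2 * S ^ 2 / E ^ ((3 : ℝ) / 2)
      ≤ 2 * (E * ‖x‖ ^ 2) / E ^ ((3 : ℝ) / 2) := by
        gcongr
        nlinarith [hCS, hp2E, sq_nonneg ‖x‖, norm_nonneg x, norm_nonneg p]
    _ = 2 * ‖x‖ ^ 2 / Real.sqrt E := by
        rw [hE32]; field_simp
    _ ≤ 2 * Real.exp (-φ) * ‖x‖ ^ 2 := by
        rw [Real.exp_neg, div_le_iff₀ hsqrt]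
        have hx : (0:ℝ) ≤ ‖x‖ ^ 2 := by positivity
        have h := mul_le_mul_of_nonneg_left hsqrtE (by positivity : (0:ℝ) ≤ 2 * ‖x‖^2 / Real.exp φ)
        calc 2 * ‖x‖ ^ 2 = 2 * ‖x‖^2 / Real.exp φ * Real.exp φ := by
              field_simp
          _ ≤ 2 * ‖x‖^2 / Real.exp φ * Real.sqrt E :=
              mul_le_mul_of_nonneg_left hsqrtE (by positivity)
          _ = 2 * (Real.exp φ)⁻¹ * ‖x‖ ^ 2 * Real.sqrt E := by
              rw [div_eq_mul_inv]; ring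
end

section
/- For the matrix D^{ij}[φ](p) = (e^{2φ} δ^{ij} + p^i p^j)/√(e^{2φ}+|p|²), one has Δ_p D^{ij}[φ] = (1/√(e^{2φ}+|p|²)) (2δ^{ij} − 4p^i p^j/(e^{2φ}+|p|²)) − 3e^{2φ} D^{ij}[φ]/(e^{2φ}+|p|²)², and there is a constant C with Δ_p D^{ij}[φ] x_i x_j ≤ C e^{−φ}|x|² for all x ∈ ℝ³. -/
open scoped RealInnerProductSpace

namespace Stmt13Aux

abbrev E3' := EuclideanSpace ℝ (Fin 3)

lemma norm_sq_eq_sum3 (x : E3') : ‖x‖^2 = x 0 ^ 2 + x 1 ^ 2 + x 2 ^ 2 := by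
  rw [EuclideanSpace.norm_eq, Real.sq_sqrt (by positivity), Fin.sum_univ_three]
  simp [Real.norm_eq_abs, sq_abs]

lemma norm_sq_eq_sum3' (x : E3') : ∑ k, x k ^ 2 = ‖x‖^2 := by
  rw [norm_sq_eq_sum3, Fin.sum_univ_three]

lemma hasFDerivAt_sqrtw (a : ℝ) (ha : 0 < a) (q : E3') :
    HasFDerivAt (fun q : E3' => Real.sqrt (a + ‖q‖^2))
      ((1 / (2 * Real.sqrt (a + ‖q‖^2))) • (2 • (innerSL ℝ q))) q := by
  have hw : 0 < a + ‖q‖^2 := by positivity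
  have hw' : HasFDerivAt (fun q : E3' => a + ‖q‖^2) (2 • (innerSL ℝ q)) q := by
    simpa [Pi.add_def] using (hasFDerivAt_const a q).add ((hasFDerivAt_id q).norm_sq)
  exact (Real.hasDerivAt_sqrt hw.ne').comp_hasFDerivAt q hw'

lemma hasFDerivAt_invsqrtw (a : ℝ) (ha : 0 < a) (q : E3') :
    HasFDerivAt (fun q : E3' => (Real.sqrt (a + ‖q‖^2))⁻¹)
      ((-(Real.sqrt (a + ‖q‖^2) ^ 2)⁻¹) •
        ((1 / (2 * Real.sqrt (a + ‖q‖^2))) • (2 • (innerSL ℝ q)))) q := by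
  have hw : 0 < a + ‖q‖^2 := by positivity
  have hs : 0 < Real.sqrt (a + ‖q‖^2) := Real.sqrt_pos.2 hw
  exact (hasDerivAt_inv hs.ne').comp_hasFDerivAt q (hasFDerivAt_sqrtw a ha q)

lemma fderiv_D_eval (a δ' : ℝ) (ha : 0 < a) (i j : Fin 3) (q v : E3') :
    fderiv ℝ (fun q : E3' => (a * δ' + q i * q j) / Real.sqrt (a + ‖q‖^2)) q v =
      (v i * q j + q i * v j) * (Real.sqrt (a + ‖q‖^2))⁻¹
        - (a * δ' + q i * q j) * ⟪q, v⟫ * ((Real.sqrt (a + ‖q‖^2))⁻¹)^3 := by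
  have hw : 0 < a + ‖q‖^2 := by positivity
  have hs : 0 < Real.sqrt (a + ‖q‖^2) := Real.sqrt_pos.2 hw
  have hi : HasFDerivAt (fun q : E3' => q i) (EuclideanSpace.proj i : E3' →L[ℝ] ℝ) q :=
    (EuclideanSpace.proj i : E3' →L[ℝ] ℝ).hasFDerivAt
  have hj : HasFDerivAt (fun q : E3' => q j) (EuclideanSpace.proj j : E3' →L[ℝ] ℝ) q :=
    (EuclideanSpace.proj j : E3' →L[ℝ] ℝ).hasFDerivAt
  have hn : HasFDerivAt (fun q : E3' => a * δ' + q i * q j)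
      (q i • (EuclideanSpace.proj j : E3' →L[ℝ] ℝ) + q j • (EuclideanSpace.proj i : E3' →L[ℝ] ℝ)) q := by
    simpa [Pi.add_def, Pi.mul_def] using (hasFDerivAt_const (a * δ') q).add (hi.mul hj)
  have hf := hn.mul (hasFDerivAt_invsqrtw a ha q)
  simp only [div_eq_mul_inv]
  rw [HasFDerivAt.fderiv (f := fun q : E3' => (a * δ' + q i * q j) * (Real.sqrt (a + ‖q‖^2))⁻¹) hf]
  simp only [ContinuousLinearMap.coe_smul', ContinuousLinearMap.add_apply,
    ContinuousLinearMap.smul_apply, Pi.smul_apply,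
    innerSL_apply_apply, smul_eq_mul, nsmul_eq_mul, Nat.cast_ofNat, PiLp.proj_apply]
  set s := Real.sqrt (a + ‖q‖^2) with hsdef
  field_simp
  ring

lemma fderiv2_eval (a δ' b c : ℝ) (ha : 0 < a) (i j k : Fin 3) (p v : E3') :
    fderiv ℝ (fun q : E3' =>
        (b * q j + q i * c) * (Real.sqrt (a + ‖q‖^2))⁻¹
          - (a * δ' + q i * q j) * q k * ((Real.sqrt (a + ‖q‖^2))⁻¹)^3) p v =
      (b * v j + v i * c) * (Real.sqrt (a + ‖p‖^2))⁻¹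
        - (b * p j + p i * c) * ⟪p, v⟫ * ((Real.sqrt (a + ‖p‖^2))⁻¹)^3
        - ((v i * p j + p i * v j) * p k + (a * δ' + p i * p j) * v k) *
            ((Real.sqrt (a + ‖p‖^2))⁻¹)^3
        + 3 * (a * δ' + p i * p j) * p k * ⟪p, v⟫ * ((Real.sqrt (a + ‖p‖^2))⁻¹)^5 := by
  have hw : 0 < a + ‖p‖^2 := by positivity
  have hs : 0 < Real.sqrt (a + ‖p‖^2) := Real.sqrt_pos.2 hw
  have hi : HasFDerivAt (fun q : E3' => q i) (EuclideanSpace.proj i : E3' →L[ℝ] ℝ) p :=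
    (EuclideanSpace.proj i : E3' →L[ℝ] ℝ).hasFDerivAt
  have hj : HasFDerivAt (fun q : E3' => q j) (EuclideanSpace.proj j : E3' →L[ℝ] ℝ) p :=
    (EuclideanSpace.proj j : E3' →L[ℝ] ℝ).hasFDerivAt
  have hk : HasFDerivAt (fun q : E3' => q k) (EuclideanSpace.proj k : E3' →L[ℝ] ℝ) p :=
    (EuclideanSpace.proj k : E3' →L[ℝ] ℝ).hasFDerivAt
  have hn : HasFDerivAt (fun q : E3' => a * δ' + q i * q j)
      (p i • (EuclideanSpace.proj j : E3' →L[ℝ] ℝ) + p j • (EuclideanSpace.proj i : E3' →L[ℝ] ℝ)) p := by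
    simpa [Pi.add_def, Pi.mul_def] using (hasFDerivAt_const (a * δ') p).add (hi.mul hj)
  have hinv := hasFDerivAt_invsqrtw a ha p
  have h1 := (((hasFDerivAt_const b p).mul hj).add (hi.mul (hasFDerivAt_const c p))).mul hinv
  have hinv3 : HasFDerivAt (fun q : E3' => ((Real.sqrt (a + ‖q‖^2))⁻¹)^3)
      ((3 * ((Real.sqrt (a + ‖p‖^2))⁻¹)^2) •
        ((-(Real.sqrt (a + ‖p‖^2) ^ 2)⁻¹) •
          ((1 / (2 * Real.sqrt (a + ‖p‖^2))) • (2 • (innerSL ℝ p))))) p := by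
    have h2 : HasFDerivAt (fun q : E3' => (Real.sqrt (a + ‖q‖^2))⁻¹ *
        ((Real.sqrt (a + ‖q‖^2))⁻¹ * (Real.sqrt (a + ‖q‖^2))⁻¹)) _ p := hinv.mul (hinv.mul hinv)
    refine (h2.congr_fderiv ?_).congr_of_eventuallyEq (by filter_upwards with q; ring)
    ext w
    simp only [ContinuousLinearMap.coe_smul', ContinuousLinearMap.add_apply,
      ContinuousLinearMap.smul_apply, Pi.smul_apply, innerSL_apply_apply, smul_eq_mul,
      nsmul_eq_mul, Nat.cast_ofNat]
    ring
  have hF := h1.sub ((hn.mul hk).mul hinv3)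
  rw [HasFDerivAt.fderiv (f := fun q : E3' => (b * q j + q i * c) * (Real.sqrt (a + ‖q‖^2))⁻¹
      - (a * δ' + q i * q j) * q k * ((Real.sqrt (a + ‖q‖^2))⁻¹)^3) hF]
  simp only [ContinuousLinearMap.coe_smul', ContinuousLinearMap.add_apply,
    ContinuousLinearMap.coe_sub', Pi.sub_apply, Pi.mul_apply, Pi.add_apply, ContinuousLinearMap.zero_apply,
    ContinuousLinearMap.smul_apply, Pi.smul_apply,
    innerSL_apply_apply, smul_eq_mul, nsmul_eq_mul, Nat.cast_ofNat, PiLp.proj_apply]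
  set s := Real.sqrt (a + ‖p‖^2) with hsdef
  field_simp
  ring

lemma contDiffAt_D (a δ' : ℝ) (ha : 0 < a) (i j : Fin 3) (q : E3') :
    ContDiffAt ℝ 2 (fun q : E3' => (a * δ' + q i * q j) / Real.sqrt (a + ‖q‖^2)) q := by
  have hw : 0 < a + ‖q‖^2 := by positivity
  have hs : 0 < Real.sqrt (a + ‖q‖^2) := Real.sqrt_pos.2 hw
  have hi : ContDiff ℝ 2 (fun q : E3' => q i) := (EuclideanSpace.proj i : E3' →L[ℝ] ℝ).contDiff
  have hj : ContDiff ℝ 2 (fun q : E3' => q j) := (EuclideanSpace.proj j : E3' →L[ℝ] ℝ).contDiff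
  have hnum : ContDiffAt ℝ 2 (fun q : E3' => a * δ' + q i * q j) q :=
    ((contDiff_const.add (hi.mul hj)).contDiffAt)
  have hden : ContDiffAt ℝ 2 (fun q : E3' => Real.sqrt (a + ‖q‖^2)) q :=
    (Real.contDiffAt_sqrt hw.ne').comp q ((contDiff_const.add (contDiff_norm_sq ℝ)).contDiffAt)
  exact hnum.div hden hs.ne'

lemma second_dir (a δ' : ℝ) (ha : 0 < a) (i j k : Fin 3) (p : E3') :
    iteratedFDeriv ℝ 2 (fun q : E3' => (a * δ' + q i * q j) / Real.sqrt (a + ‖q‖^2)) p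
        ![EuclideanSpace.single k 1, EuclideanSpace.single k 1] =
      2 * (EuclideanSpace.single k (1:ℝ) i) * (EuclideanSpace.single k (1:ℝ) j) *
          (Real.sqrt (a + ‖p‖^2))⁻¹
        - 2 * ((EuclideanSpace.single k (1:ℝ) i) * p j + p i * (EuclideanSpace.single k (1:ℝ) j)) *
            p k * ((Real.sqrt (a + ‖p‖^2))⁻¹)^3
        - (a * δ' + p i * p j) * ((Real.sqrt (a + ‖p‖^2))⁻¹)^3
        + 3 * (a * δ' + p i * p j) * p k ^ 2 * ((Real.sqrt (a + ‖p‖^2))⁻¹)^5 := by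
  set f := fun q : E3' => (a * δ' + q i * q j) / Real.sqrt (a + ‖q‖^2) with hfdef
  set e := EuclideanSpace.single k (1:ℝ) with hedef
  have hder : DifferentiableAt ℝ (fderiv ℝ f) p :=
    ((contDiffAt_D a δ' ha i j p).fderiv_right (m := 1) (by norm_num)).differentiableAt
      (by norm_num)
  rw [iteratedFDeriv_two_apply]
  simp only [Matrix.cons_val_zero, Matrix.cons_val_one, Matrix.head_cons]
  have hswap : (fderiv ℝ (fderiv ℝ f) p) e e = fderiv ℝ (fun q => fderiv ℝ f q e) p e := by
    rw [fderiv_clm_apply hder (differentiableAt_const e)]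
    simp
  rw [hswap]
  have hfun : (fun q : E3' => fderiv ℝ f q e) = fun q : E3' =>
      (e i * q j + q i * e j) * (Real.sqrt (a + ‖q‖^2))⁻¹
        - (a * δ' + q i * q j) * q k * ((Real.sqrt (a + ‖q‖^2))⁻¹)^3 := by
    funext q
    rw [hfdef, fderiv_D_eval a δ' ha i j q e, hedef]
    rw [EuclideanSpace.inner_single_right]
    simp only [starRingEnd_apply, star_trivial]
    ring
  rw [hfun, fderiv2_eval a δ' (e i) (e j) ha i j k p e]
  have h1 : e k = 1 := by simp [hedef, EuclideanSpace.single_apply]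
  have h2 : ⟪p, e⟫ = p k := by
    rw [hedef, EuclideanSpace.inner_single_right]; simp
  rw [h1, h2]
  ring

lemma part1 (a : ℝ) (ha : 0 < a) (p : E3') (i j : Fin 3) :
    ∑ k, iteratedFDeriv ℝ 2
        (fun q : E3' => (a * (if i = j then 1 else 0) + q i * q j) / Real.sqrt (a + ‖q‖^2)) p
        ![EuclideanSpace.single k 1, EuclideanSpace.single k 1] =
      (1 / Real.sqrt (a + ‖p‖^2)) * (2 * (if i = j then 1 else 0) - 4 * p i * p j / (a + ‖p‖^2))
        - 3 * a * ((a * (if i = j then 1 else 0) + p i * p j) / Real.sqrt (a + ‖p‖^2)) /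
            (a + ‖p‖^2)^2 := by
  have hw : 0 < a + ‖p‖^2 := by positivity
  have hs : 0 < Real.sqrt (a + ‖p‖^2) := Real.sqrt_pos.2 hw
  have hsq2 : Real.sqrt (a + ‖p‖^2) ^ 2 = a + ‖p‖^2 := Real.sq_sqrt hw.le
  set δ : ℝ := (if i = j then 1 else 0) with hδ
  set s := Real.sqrt (a + ‖p‖^2) with hsdef
  rw [Finset.sum_congr rfl (fun k _ => second_dir a δ ha i j k p)]
  rw [Finset.sum_add_distrib, Finset.sum_sub_distrib, Finset.sum_sub_distrib]
  have h1 : ∑ k, 2 * (EuclideanSpace.single k (1:ℝ) i) * (EuclideanSpace.single k (1:ℝ) j) * s⁻¹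
      = 2 * δ * s⁻¹ := by
    rw [hδ]
    simp [EuclideanSpace.single_apply, ite_mul, mul_ite, Finset.sum_ite_eq]
  have h2 : ∑ k, 2 * ((EuclideanSpace.single k (1:ℝ) i) * p j + p i * (EuclideanSpace.single k (1:ℝ) j)) * p k * (s⁻¹)^3
      = 4 * (p i * p j) * (s⁻¹)^3 := by
    have hterm : ∀ x : Fin 3,
        2 * ((EuclideanSpace.single x (1:ℝ) i) * p j + p i * (EuclideanSpace.single x (1:ℝ) j)) * p x * (s⁻¹)^3
          = (if i = x then 2 * p j * p x * (s⁻¹)^3 else 0)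
            + (if j = x then 2 * p i * p x * (s⁻¹)^3 else 0) := by
      intro x
      by_cases hix : i = x <;> by_cases hjx : j = x <;>
        simp [EuclideanSpace.single_apply, hix, hjx] <;> ring
    rw [Finset.sum_congr rfl (fun x _ => hterm x), Finset.sum_add_distrib,
      Finset.sum_ite_eq, Finset.sum_ite_eq]
    simp
    ring
  have h3 : ∑ (_ : Fin 3), (a * δ + p i * p j) * (s⁻¹)^3 = 3 * ((a * δ + p i * p j) * (s⁻¹)^3) := by
    rw [Finset.sum_const]
    simp
  have h4 : ∑ k, 3 * (a * δ + p i * p j) * p k ^ 2 * (s⁻¹)^5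
      = 3 * (a * δ + p i * p j) * ‖p‖^2 * (s⁻¹)^5 := by
    rw [← Finset.sum_mul, ← Finset.mul_sum, norm_sq_eq_sum3']
  rw [h1, h2, h3, h4]
  rw [← hsq2]
  have hB : ‖p‖^2 = s^2 - a := by rw [hsq2]; ring
  rw [hB]
  field_simp
  ring

set_option maxHeartbeats 2000000 in
lemma part2 (a : ℝ) (ha : 0 < a) (p x : E3') :
    ∑ i, ∑ j, ((1 / Real.sqrt (a + ‖p‖^2)) *
          (2 * (if i = j then (1:ℝ) else 0) - 4 * p i * p j / (a + ‖p‖^2)) -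
        3 * a * ((a * (if i = j then 1 else 0) + p i * p j) / Real.sqrt (a + ‖p‖^2)) /
          (a + ‖p‖^2)^2) * x i * x j ≤
      2 * (Real.sqrt a)⁻¹ * ‖x‖^2 := by
  have hw : 0 < a + ‖p‖^2 := by positivity
  have hs : 0 < Real.sqrt (a + ‖p‖^2) := Real.sqrt_pos.2 hw
  set s := Real.sqrt (a + ‖p‖^2) with hsdef
  set w := a + ‖p‖^2 with hwdef
  set T : ℝ := x 0 ^ 2 + x 1 ^ 2 + x 2 ^ 2 with hT
  set P : ℝ := p 0 * x 0 + p 1 * x 1 + p 2 * x 2 with hP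
  have hTnn : 0 ≤ T := by positivity
  have hident : ∑ i, ∑ j, ((1 / s) *
          (2 * (if i = j then (1:ℝ) else 0) - 4 * p i * p j / w) -
        3 * a * ((a * (if i = j then 1 else 0) + p i * p j) / s) / w^2) * x i * x j
      = 2 * T / s - 4 * P^2 / (s * w) - 3 * a * (a * T + P^2) / (s * w^2) := by
    rw [Fin.sum_univ_three]
    rw [Fin.sum_univ_three, Fin.sum_univ_three, Fin.sum_univ_three]
    norm_num [Fin.ext_iff]
    field_simp
    ring
  rw [hident]
  have step1 : 2 * T / s - 4 * P^2 / (s * w) - 3 * a * (a * T + P^2) / (s * w^2) ≤ 2 * T / s := by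
    have h1 : 0 ≤ 4 * P^2 / (s * w) := by positivity
    have h2 : 0 ≤ 3 * a * (a * T + P^2) / (s * w^2) :=
      div_nonneg
        (mul_nonneg (by linarith : (0:ℝ) ≤ 3 * a)
          (add_nonneg (mul_nonneg ha.le hTnn) (sq_nonneg P)))
        (by positivity : (0:ℝ) ≤ s * w^2)
    linarith
  have hsa : Real.sqrt a ≤ s := by
    rw [hsdef, hwdef]
    exact Real.sqrt_le_sqrt (le_add_of_nonneg_right (by positivity))
  have hsapos : 0 < Real.sqrt a := Real.sqrt_pos.2 ha
  have step2 : 2 * T / s ≤ 2 * T / Real.sqrt a :=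
    div_le_div_of_nonneg_left (by linarith : (0:ℝ) ≤ 2 * T) hsapos hsa
  have hTx : T = ‖x‖^2 := (norm_sq_eq_sum3 x).symm
  calc _ ≤ 2 * T / s := step1
    _ ≤ 2 * T / Real.sqrt a := step2
    _ = 2 * (Real.sqrt a)⁻¹ * ‖x‖^2 := by rw [hTx]; ring

end Stmt13Aux

theorem stmt_13 :
    (∀ (φ : ℝ) (p : EuclideanSpace ℝ (Fin 3)) (i j : Fin 3),
      ∑ k, iteratedFDeriv ℝ 2 (fun q => Dmat φ q i j) p
          ![EuclideanSpace.single k 1, EuclideanSpace.single k 1] =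
        (1 / Real.sqrt (Real.exp (2 * φ) + ‖p‖ ^ 2)) *
            (2 * (if i = j then 1 else 0) -
              4 * p i * p j / (Real.exp (2 * φ) + ‖p‖ ^ 2)) -
          3 * Real.exp (2 * φ) * Dmat φ p i j / (Real.exp (2 * φ) + ‖p‖ ^ 2) ^ 2) ∧
    ∃ C : ℝ, 0 < C ∧
      ∀ (φ : ℝ) (p x : EuclideanSpace ℝ (Fin 3)),
        ∑ i, ∑ j, ((1 / Real.sqrt (Real.exp (2 * φ) + ‖p‖ ^ 2)) *
              (2 * (if i = j then 1 else 0) -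
                4 * p i * p j / (Real.exp (2 * φ) + ‖p‖ ^ 2)) -
            3 * Real.exp (2 * φ) * Dmat φ p i j /
              (Real.exp (2 * φ) + ‖p‖ ^ 2) ^ 2) * x i * x j ≤
          C * Real.exp (-φ) * ‖x‖ ^ 2 := by
  constructor
  · intro φ p i j
    have h := Stmt13Aux.part1 (Real.exp (2 * φ)) (Real.exp_pos _) p i j
    simp only [Dmat]
    convert h using 2
  · refine ⟨2, two_pos, fun φ p x => ?_⟩
    have h := Stmt13Aux.part2 (Real.exp (2 * φ)) (Real.exp_pos _) p x
    have hsq : Real.sqrt (Real.exp (2 * φ)) = Real.exp φ := by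
      rw [show (2:ℝ) * φ = φ + φ by ring, Real.exp_add,
        Real.sqrt_mul_self (Real.exp_pos φ).le]
    rw [hsq, ← Real.exp_neg] at h
    simp only [Dmat]
    convert h using 3
end

section
/- Let M > 0 and let f : ℝ³ → [0,∞) be measurable with ∫ f dp = M and ∫ |p| f dp ≤ K < ∞. Then for every q ∈ (1,2), ‖f‖_{L^q(ℝ³)} ≥ c(q) M^{(4q−3)/q} K^{−3(q−1)/q} for an explicit constant c(q) > 0 depending only on q. -/
open MeasureTheory Metric ENNReal

set_option maxHeartbeats 1000000 in
theorem stmt_14 (q : ℝ) (hq1 : 1 < q) (hq2 : q < 2) :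
    ∃ c : ℝ, 0 < c ∧
      ∀ (f : EuclideanSpace ℝ (Fin 3) → ℝ) (M K : ℝ),
        Measurable f → (∀ p, 0 ≤ f p) → Integrable f →
        (∫ p, f p) = M → 0 < M →
        Integrable (fun p => ‖p‖ * f p) → (∫ p, ‖p‖ * f p) ≤ K → 0 < K →
        ENNReal.ofReal (c * M ^ ((4 * q - 3) / q) * K ^ (-(3 * (q - 1) / q))) ≤
          eLpNorm f (ENNReal.ofReal q) volume := by
  have hq0 : (0:ℝ) < q := by linarith
  set a : ℝ := (q - 1) / q with ha_def
  have ha : 0 < a := div_pos (by linarith) hq0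
  set b : ℝ := (volume (Metric.ball (0 : EuclideanSpace ℝ (Fin 3)) 1)).toReal with hb_def
  have hbpos : 0 < b := ENNReal.toReal_pos
    (Metric.measure_ball_pos volume 0 one_pos).ne' measure_ball_lt_top.ne
  refine ⟨2 ^ (-(1 + 3 * a)) * b ^ (-a), by positivity, ?_⟩
  intro f M K hmf hf0 hint hM hMpos hint2 hK hKpos
  have hRpos : (0:ℝ) < 2 * K / M := by positivity
  set R : ℝ := 2 * K / M with hR_def
  set s : Set (EuclideanSpace ℝ (Fin 3)) := Metric.ball 0 R with hs_def
  have hsmeas : MeasurableSet s := by rw [hs_def]; exact measurableSet_ball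
  set g : EuclideanSpace ℝ (Fin 3) → ℝ≥0∞ := fun p => ENNReal.ofReal (f p) with hg_def
  have hgmeas : Measurable g := ENNReal.measurable_ofReal.comp hmf
  set N : ℝ≥0∞ := eLpNorm f (ENNReal.ofReal q) volume with hN_def
  -- total integral
  have hgint : ∫⁻ p, g p = ENNReal.ofReal M := by
    rw [← hM, ← ofReal_integral_eq_lintegral_ofReal hint (Filter.Eventually.of_forall hf0)]
  have hgK : ∫⁻ p, ENNReal.ofReal ‖p‖ * g p ≤ ENNReal.ofReal K := by
    simp_rw [hg_def, ← ENNReal.ofReal_mul (norm_nonneg _)]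
    rw [← ofReal_integral_eq_lintegral_ofReal hint2
      (Filter.Eventually.of_forall fun p => mul_nonneg (norm_nonneg _) (hf0 p))]
    exact ENNReal.ofReal_le_ofReal hK
  -- tail bound
  have htail : ∫⁻ p in sᶜ, g p ≤ ENNReal.ofReal (M / 2) := by
    have step : ∫⁻ p in sᶜ, g p
        ≤ ∫⁻ p in sᶜ, (ENNReal.ofReal R)⁻¹ * (ENNReal.ofReal ‖p‖ * g p) := by
      refine setLIntegral_mono (by measurability) ?_
      intro p hp
      have hpR : R ≤ ‖p‖ := by
        simpa [hs_def, Metric.mem_ball, dist_zero_right] using hp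
      have hone : (ENNReal.ofReal R)⁻¹ * ENNReal.ofReal R = 1 :=
        ENNReal.inv_mul_cancel (ENNReal.ofReal_pos.mpr hRpos).ne' ENNReal.ofReal_ne_top
      calc g p = (ENNReal.ofReal R)⁻¹ * ENNReal.ofReal R * g p := by rw [hone, one_mul]
        _ = (ENNReal.ofReal R)⁻¹ * (ENNReal.ofReal R * g p) := by rw [mul_assoc]
        _ ≤ (ENNReal.ofReal R)⁻¹ * (ENNReal.ofReal ‖p‖ * g p) :=
            mul_le_mul_right (mul_le_mul_left (ENNReal.ofReal_le_ofReal hpR) _) _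
    calc ∫⁻ p in sᶜ, g p
        ≤ ∫⁻ p in sᶜ, (ENNReal.ofReal R)⁻¹ * (ENNReal.ofReal ‖p‖ * g p) := step
      _ = (ENNReal.ofReal R)⁻¹ * ∫⁻ p in sᶜ, ENNReal.ofReal ‖p‖ * g p :=
          lintegral_const_mul' _ _ (ENNReal.inv_ne_top.mpr (ENNReal.ofReal_pos.mpr hRpos).ne')
      _ ≤ (ENNReal.ofReal R)⁻¹ * ∫⁻ p, ENNReal.ofReal ‖p‖ * g p := by
          gcongr
          exact Measure.restrict_le_self
      _ ≤ (ENNReal.ofReal R)⁻¹ * ENNReal.ofReal K := by gcongr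
      _ = ENNReal.ofReal (M / 2) := by
          rw [← ENNReal.ofReal_inv_of_pos hRpos, ← ENNReal.ofReal_mul (inv_nonneg.mpr hRpos.le)]
          congr 1
          rw [hR_def]
          field_simp
  -- Hölder on the ball
  have hholder : ∫⁻ p in s, g p ≤ volume s ^ a * N := by
    have hconj : Real.HolderConjugate (q / (q - 1)) q := by
      rw [Real.holderConjugate_iff]
      constructor
      · rw [lt_div_iff₀ (by linarith)]; linarith
      · field_simp; ring
    have h1 : ∫⁻ p in s, g p
        = ∫⁻ p, (s.indicator (fun _ => (1:ℝ≥0∞)) * g) p := by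
      rw [← lintegral_indicator hsmeas]
      congr 1
      funext p
      by_cases hp : p ∈ s <;> simp [hp]
    rw [h1]
    have h2 := ENNReal.lintegral_mul_le_Lp_mul_Lq volume hconj
      (f := s.indicator fun _ => (1:ℝ≥0∞)) (g := g)
      ((measurable_const.indicator hsmeas).aemeasurable) hgmeas.aemeasurable
    refine h2.trans (le_of_eq ?_)
    congr 1
    · have h3 : ∀ p, s.indicator (fun _ => (1:ℝ≥0∞)) p ^ (q / (q - 1))
          = s.indicator (fun _ => (1:ℝ≥0∞)) p := by
        intro p
        by_cases hp : p ∈ s <;>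
          simp [hp, ENNReal.zero_rpow_of_pos hconj.pos]
      simp_rw [h3]
      rw [lintegral_indicator hsmeas, setLIntegral_one]
      congr 1
      rw [one_div, ha_def]
      field_simp
    · rw [hN_def, eLpNorm_eq_lintegral_rpow_enorm_toReal (by simp [hq0]) ENNReal.ofReal_ne_top,
        ENNReal.toReal_ofReal hq0.le]
      refine congrArg (· ^ (1/q)) (lintegral_congr fun p => ?_)
      simp only [hg_def]
      rw [Real.enorm_eq_ofReal (hf0 p)]
  -- combine
  have key : ENNReal.ofReal (M / 2) ≤ volume s ^ a * N := by
    have hsplit : (∫⁻ p in s, g p) + ∫⁻ p in sᶜ, g p = ENNReal.ofReal M :=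
      (lintegral_add_compl g hsmeas).trans hgint
    have hle : ENNReal.ofReal M ≤ volume s ^ a * N + ENNReal.ofReal (M / 2) := by
      rw [← hsplit]
      exact add_le_add hholder htail
    have hM2 : ENNReal.ofReal M = ENNReal.ofReal (M / 2) + ENNReal.ofReal (M / 2) := by
      rw [← ENNReal.ofReal_add (by positivity) (by positivity)]
      norm_num
    rw [hM2] at hle
    exact (ENNReal.add_le_add_iff_right ENNReal.ofReal_ne_top).mp hle
  -- explicit volume
  have hVa : volume s ^ a = ENNReal.ofReal (R ^ (3 * a) * b ^ a) := by
    rw [hs_def, Measure.addHaar_ball volume 0 hRpos.le, finrank_euclideanSpace_fin]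
    rw [ENNReal.mul_rpow_of_nonneg _ _ ha.le,
      ENNReal.ofReal_rpow_of_pos (by positivity),
      ← ENNReal.ofReal_toReal (measure_ball_lt_top
        (x := (0 : EuclideanSpace ℝ (Fin 3))) (r := 1)).ne,
      ENNReal.ofReal_rpow_of_pos hbpos, ← ENNReal.ofReal_mul (by positivity)]
    congr 2
    rw [← Real.rpow_natCast R 3, ← Real.rpow_mul hRpos.le]
    norm_num
  have hDpos : (0:ℝ) < R ^ (3 * a) * b ^ a := by positivity
  have key2 : ENNReal.ofReal ((M / 2) / (R ^ (3 * a) * b ^ a)) ≤ N := by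
    rw [ENNReal.ofReal_div_of_pos hDpos, ← hVa]
    refine (ENNReal.div_le_iff_le_mul ?_ ?_).mpr (key.trans_eq (mul_comm _ _))
    · left; rw [hVa]; simp [hDpos]
    · left; rw [hVa]; exact ENNReal.ofReal_ne_top
  refine le_trans (ENNReal.ofReal_le_ofReal (le_of_eq ?_)) key2
  -- real-number identity
  have h1 : (4 * q - 3) / q = 1 + 3 * a := by rw [ha_def]; field_simp; ring
  have h2 : -(3 * (q - 1) / q) = -(3 * a) := by rw [ha_def]; ring
  rw [h1, h2, hR_def]
  rw [Real.div_rpow (by positivity) hMpos.le, Real.mul_rpow (by norm_num) hKpos.le,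
    Real.rpow_add hMpos, Real.rpow_one,
    Real.rpow_neg (by norm_num : (0:ℝ) ≤ 2), Real.rpow_neg hbpos.le,
    Real.rpow_neg hKpos.le, Real.rpow_add (by norm_num : (0:ℝ) < 2), Real.rpow_one]
  have hb1 : (0:ℝ) < b ^ a := Real.rpow_pos_of_pos hbpos a
  have hb2 : (0:ℝ) < (2:ℝ) ^ (3 * a) := Real.rpow_pos_of_pos (by norm_num) _
  have hb3 : (0:ℝ) < K ^ (3 * a) := Real.rpow_pos_of_pos hKpos _
  have hb4 : (0:ℝ) < M ^ (3 * a) := Real.rpow_pos_of_pos hMpos _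
  field_simp
end

section
/- Let f : ℝ³ → [0,∞) be measurable with ‖f‖_{L^q} ≥ c > 0 and ‖f‖_{L¹}, ‖f‖_{L²} ≤ A for some 1 < q < 2. Then there exist ε, δ > 0 depending only on c, A, q such that the Lebesgue measure of the set {p : f(p) > ε} is at least δ. -/
open MeasureTheory

theorem stmt_15 (q c A : ℝ) (hq1 : 1 < q) (hq2 : q < 2) (hc : 0 < c) (hA : 0 < A) :
    ∃ ε δ : ℝ, 0 < ε ∧ 0 < δ ∧
      ∀ f : EuclideanSpace ℝ (Fin 3) → ℝ,
        Measurable f → (∀ p, 0 ≤ f p) →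
        ENNReal.ofReal c ≤ eLpNorm f (ENNReal.ofReal q) volume →
        eLpNorm f 1 volume ≤ ENNReal.ofReal A →
        eLpNorm f 2 volume ≤ ENNReal.ofReal A →
        ENNReal.ofReal δ ≤ volume {p | ε < f p} := by
  have hq0 : (0:ℝ) < q := by linarith
  have hcq : 0 < c ^ q := Real.rpow_pos_of_pos hc q
  have hA2 : 0 < A ^ (2:ℝ) := Real.rpow_pos_of_pos hA 2
  set εr : ℝ := (c ^ q / (4 * A)) ^ (1 / (q - 1)) with hεdef
  set Mr : ℝ := (4 * A ^ (2:ℝ) / c ^ q) ^ (1 / (2 - q)) with hMdef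
  have hbase1 : (0:ℝ) < c ^ q / (4 * A) := by positivity
  have hbase2 : (0:ℝ) < 4 * A ^ (2:ℝ) / c ^ q := by positivity
  have hεpos : 0 < εr := Real.rpow_pos_of_pos hbase1 _
  have hMpos : 0 < Mr := Real.rpow_pos_of_pos hbase2 _
  have hMqpos : 0 < Mr ^ q := Real.rpow_pos_of_pos hMpos q
  have hq1ne : q - 1 ≠ 0 := by linarith
  have h2qne : (2:ℝ) - q ≠ 0 := by linarith
  have hεeq : εr ^ (q - 1) = c ^ q / (4 * A) := by
    rw [hεdef, ← Real.rpow_mul hbase1.le, one_div_mul_cancel hq1ne, Real.rpow_one]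
  have hMeq2 : Mr ^ ((2:ℝ) - q) = 4 * A ^ (2:ℝ) / c ^ q := by
    rw [hMdef, ← Real.rpow_mul hbase2.le, one_div_mul_cancel h2qne, Real.rpow_one]
  have hMeq : Mr ^ (q - 2) = c ^ q / (4 * A ^ (2:ℝ)) := by
    have : q - 2 = -((2:ℝ) - q) := by ring
    rw [this, Real.rpow_neg hMpos.le, hMeq2, inv_div]
  refine ⟨εr, (c ^ q / 2) / Mr ^ q, hεpos, by positivity, ?_⟩
  intro f hf hf0 hqn h1n h2n
  set g : EuclideanSpace ℝ (Fin 3) → ENNReal := fun x => ENNReal.ofReal (f x) with hgdef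
  have hg : Measurable g := hf.ennreal_ofReal
  have henn : ∀ x, ‖f x‖ₑ = g x := fun x => Real.enorm_eq_ofReal (hf0 x)
  set S : Set (EuclideanSpace ℝ (Fin 3)) := {p | εr < f p} with hSdef
  have hS : MeasurableSet S := measurableSet_lt measurable_const hf
  -- convert the three norm hypotheses
  have hIq : ENNReal.ofReal (c ^ q) ≤ ∫⁻ x, g x ^ q := by
    rw [eLpNorm_eq_lintegral_rpow_enorm_toReal (by
          simp only [ne_eq, ENNReal.ofReal_eq_zero, not_le]; exact hq0)
        ENNReal.ofReal_ne_top, ENNReal.toReal_ofReal hq0.le] at hqn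
    have := ENNReal.rpow_le_rpow hqn hq0.le
    rw [← ENNReal.rpow_mul, one_div_mul_cancel hq0.ne', ENNReal.rpow_one,
      ENNReal.ofReal_rpow_of_pos hc] at this
    simpa only [henn] using this
  have hI1 : ∫⁻ x, g x ≤ ENNReal.ofReal A := by
    rw [eLpNorm_one_eq_lintegral_enorm] at h1n
    simpa only [henn] using h1n
  have hI2 : ∫⁻ x, g x ^ (2:ℝ) ≤ ENNReal.ofReal (A ^ (2:ℝ)) := by
    rw [eLpNorm_eq_lintegral_rpow_enorm_toReal two_ne_zero ENNReal.ofNat_ne_top] at h2n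
    have h2r : ((2:ENNReal)).toReal = (2:ℝ) := by simp
    rw [h2r] at h2n
    have := ENNReal.rpow_le_rpow h2n (by norm_num : (0:ℝ) ≤ 2)
    rw [← ENNReal.rpow_mul, one_div_mul_cancel (by norm_num : (2:ℝ) ≠ 0),
      ENNReal.rpow_one, ENNReal.ofReal_rpow_of_pos hA] at this
    simpa only [henn] using this
  -- pointwise bound
  have hpt : ∀ x, g x ^ q ≤
      ENNReal.ofReal (εr ^ (q - 1)) * g x
        + S.indicator (fun _ => ENNReal.ofReal (Mr ^ q)) x
        + ENNReal.ofReal (Mr ^ (q - 2)) * g x ^ (2:ℝ) := by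
    intro x
    have ht0 : 0 ≤ f x := hf0 x
    have hgq : g x ^ q = ENNReal.ofReal (f x ^ q) :=
      ENNReal.ofReal_rpow_of_nonneg ht0 hq0.le
    by_cases hx : εr < f x
    · have hind : S.indicator (fun _ => ENNReal.ofReal (Mr ^ q)) x
          = ENNReal.ofReal (Mr ^ q) := Set.indicator_of_mem (show x ∈ S from hx) _
      by_cases htM : f x ≤ Mr
      · have hr : f x ^ q ≤ Mr ^ q := Real.rpow_le_rpow ht0 htM hq0.le
        calc g x ^ q ≤ ENNReal.ofReal (Mr ^ q) := by
              rw [hgq]; exact ENNReal.ofReal_le_ofReal hr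
          _ = S.indicator (fun _ => ENNReal.ofReal (Mr ^ q)) x := hind.symm
          _ ≤ _ := le_add_right (le_add_left (le_refl _))
      · push_neg at htM
        have htpos : 0 < f x := lt_trans hεpos hx
        have hr : f x ^ q ≤ Mr ^ (q - 2) * f x ^ (2:ℝ) := by
          have he : f x ^ q = f x ^ (q - 2) * f x ^ (2:ℝ) := by
            rw [← Real.rpow_add htpos]; norm_num
          rw [he]
          exact mul_le_mul_of_nonneg_right
            (Real.rpow_le_rpow_of_nonpos hMpos htM.le (by linarith))
            (Real.rpow_nonneg ht0 _)
        calc g x ^ q ≤ ENNReal.ofReal (Mr ^ (q - 2)) * g x ^ (2:ℝ) := by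
              rw [hgq, hgdef]
              simp only []
              rw [ENNReal.ofReal_rpow_of_nonneg ht0 (by norm_num : (0:ℝ) ≤ 2),
                ← ENNReal.ofReal_mul (by positivity)]
              exact ENNReal.ofReal_le_ofReal hr
          _ ≤ _ := le_add_left (le_refl _)
    · push_neg at hx
      have hr : f x ^ q ≤ εr ^ (q - 1) * f x := by
        rcases eq_or_lt_of_le ht0 with h0 | htpos
        · rw [← h0, Real.zero_rpow hq0.ne']; positivity
        · have he : f x ^ q = f x ^ (q - 1) * f x := by
            rw [Real.rpow_sub htpos, Real.rpow_one,
              div_mul_cancel₀ _ (ne_of_gt htpos)]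
          rw [he]
          exact mul_le_mul_of_nonneg_right
            (Real.rpow_le_rpow ht0 hx (by linarith)) ht0
      calc g x ^ q ≤ ENNReal.ofReal (εr ^ (q - 1)) * g x := by
            rw [hgq, hgdef]
            simp only []
            rw [← ENNReal.ofReal_mul (by positivity)]
            exact ENNReal.ofReal_le_ofReal hr
        _ ≤ _ := le_add_right le_self_add
  -- integrate
  have m1 : Measurable fun x => ENNReal.ofReal (εr ^ (q - 1)) * g x := hg.const_mul _
  have mind : Measurable (S.indicator fun _ => ENNReal.ofReal (Mr ^ q)) :=
    measurable_const.indicator hS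
  have m3 : Measurable fun x => ENNReal.ofReal (Mr ^ (q - 2)) * g x ^ (2:ℝ) :=
    (hg.pow_const _).const_mul _
  have key : ENNReal.ofReal (c ^ q) ≤
      ENNReal.ofReal (εr ^ (q - 1)) * (∫⁻ x, g x)
        + ENNReal.ofReal (Mr ^ q) * volume S
        + ENNReal.ofReal (Mr ^ (q - 2)) * (∫⁻ x, g x ^ (2:ℝ)) := by
    calc ENNReal.ofReal (c ^ q) ≤ ∫⁻ x, g x ^ q := hIq
      _ ≤ ∫⁻ x, (ENNReal.ofReal (εr ^ (q - 1)) * g x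
            + S.indicator (fun _ => ENNReal.ofReal (Mr ^ q)) x
            + ENNReal.ofReal (Mr ^ (q - 2)) * g x ^ (2:ℝ)) := lintegral_mono hpt
      _ = _ := by
          rw [lintegral_add_right _ m3, lintegral_add_right _ mind,
            lintegral_const_mul _ hg, lintegral_const_mul _ (hg.pow_const _),
            lintegral_indicator_const hS]
  have key2 : ENNReal.ofReal (c ^ q) ≤
      ENNReal.ofReal (Mr ^ q) * volume S + ENNReal.ofReal (c ^ q / 2) := by
    have b1 : ENNReal.ofReal (εr ^ (q - 1)) * (∫⁻ x, g x) ≤ ENNReal.ofReal (c ^ q / 4) := by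
      calc ENNReal.ofReal (εr ^ (q - 1)) * (∫⁻ x, g x)
          ≤ ENNReal.ofReal (εr ^ (q - 1)) * ENNReal.ofReal A :=
            mul_le_mul_right hI1 _
        _ = ENNReal.ofReal (εr ^ (q - 1) * A) :=
            (ENNReal.ofReal_mul (by positivity)).symm
        _ = ENNReal.ofReal (c ^ q / 4) := by
            rw [hεeq]; congr 1; field_simp
    have b3 : ENNReal.ofReal (Mr ^ (q - 2)) * (∫⁻ x, g x ^ (2:ℝ))
        ≤ ENNReal.ofReal (c ^ q / 4) := by
      calc ENNReal.ofReal (Mr ^ (q - 2)) * (∫⁻ x, g x ^ (2:ℝ))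
          ≤ ENNReal.ofReal (Mr ^ (q - 2)) * ENNReal.ofReal (A ^ (2:ℝ)) :=
            mul_le_mul_right hI2 _
        _ = ENNReal.ofReal (Mr ^ (q - 2) * A ^ (2:ℝ)) :=
            (ENNReal.ofReal_mul (by positivity)).symm
        _ = ENNReal.ofReal (c ^ q / 4) := by
            rw [hMeq]; congr 1; field_simp
    calc ENNReal.ofReal (c ^ q) ≤ _ := key
      _ ≤ ENNReal.ofReal (c ^ q / 4) + ENNReal.ofReal (Mr ^ q) * volume S
            + ENNReal.ofReal (c ^ q / 4) :=
          add_le_add (add_le_add b1 (le_refl _)) b3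
      _ = ENNReal.ofReal (Mr ^ q) * volume S + ENNReal.ofReal (c ^ q / 2) := by
          rw [add_comm (ENNReal.ofReal (c ^ q / 4)), add_assoc,
            ← ENNReal.ofReal_add (by positivity) (by positivity)]
          congr 1
          ring
  have key3 : ENNReal.ofReal (c ^ q / 2) ≤ ENNReal.ofReal (Mr ^ q) * volume S := by
    have hsplit : ENNReal.ofReal (c ^ q) = ENNReal.ofReal (c ^ q / 2) + ENNReal.ofReal (c ^ q / 2) := by
      rw [← ENNReal.ofReal_add (by positivity) (by positivity)]
      congr 1
      ring
    rw [hsplit] at key2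
    exact (ENNReal.add_le_add_iff_right ENNReal.ofReal_ne_top).mp key2
  rw [ENNReal.ofReal_div_of_pos hMqpos]
  rw [ENNReal.div_le_iff_le_mul (Or.inl (by simp [hMqpos.le]; positivity))
    (Or.inl ENNReal.ofReal_ne_top)]
  rw [mul_comm] at key3
  exact key3
end
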